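/- arXiv:1404.7208 — 2 statements merged into one kernel-verified Lean document; each statement's English description precedes it below -/
import Mathlib

section
/- Let (Y_k, Z_k), k = 1,...,K, be independent pairs of random variables where each pair (Y_k, Z_k) is negatively quadrant dependent. Let H : ℝ^K → ℝ be coordinatewise monotone (in each argument either nondecreasing or nonincreasing, with consistent direction used for both arguments of a pair). Then E[H(Y_1,...,Y_K) H(Z_1,...,Z_K)] ≤ E[H(Y_1,...,Y_K)] E[H(Z_1,...,Z_K)], assuming all expectations exist. -/
open MeasureTheory Set Filter
open scoped ENNReal Topology

/-- Negative quadrant dependence of two real random variables. -/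
def NQD {Ω : Type*} [MeasurableSpace Ω] (P : Measure Ω) (Y Z : Ω → ℝ) : Prop :=
  ∀ y z : ℝ, (P {ω | Y ω ≤ y ∧ Z ω ≤ z}).toReal ≤
    (P {ω | Y ω ≤ y}).toReal * (P {ω | Z ω ≤ z}).toReal

section T1

/-- upper set predicate -/
def IsUpper2 {α : Type*} [LE α] (A : Set α) : Prop := ∀ ⦃x y⦄, x ∈ A → x ≤ y → y ∈ A

lemma step_null {W : Type*} [MeasurableSpace W] [Preorder W]
    (μ : Measure ℝ) [IsProbabilityMeasure μ] (π : Measure W) [IsProbabilityMeasure π]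
    (oracle : ∀ C : Set W, IsUpper2 C → NullMeasurableSet C π)
    (A : Set (ℝ × W))
    (hA : ∀ ⦃p q : ℝ × W⦄, p ∈ A → p.1 ≤ q.1 → p.2 ≤ q.2 → q ∈ A) :
    NullMeasurableSet A (μ.prod π) := by
  classical
  -- sections
  set Asec : ℝ → Set W := fun t => {w | (t, w) ∈ A} with hAsec
  have hsec_upper : ∀ t, IsUpper2 (Asec t) := by
    intro t x y hx hxy
    exact hA hx le_rfl hxy
  have hsec_mono : ∀ {s t : ℝ}, s ≤ t → Asec s ⊆ Asec t := by
    intro s t hst w hw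
    exact hA hw hst le_rfl
  -- measurable versions of rational sections
  set B : ℚ → Set W := fun q => toMeasurable π (Asec (q : ℝ)) with hB
  have hBm : ∀ q, MeasurableSet (B q) := fun q => measurableSet_toMeasurable _ _
  have hBe : ∀ q : ℚ, Asec (q : ℝ) =ᵐ[π] B q := fun q =>
    ((oracle _ (hsec_upper _)).toMeasurable_ae_eq).symm
  set N : Set W := ⋃ q : ℚ, (Asec (q : ℝ) \ B q) ∪ (B q \ Asec (q : ℝ)) with hN
  have hNnull : π N = 0 := by
    refine measure_iUnion_null fun q => ?_
    have h := (ae_eq_set.1 (hBe q))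
    exact measure_union_null h.1 h.2
  -- pieces
  set Alow : Set (ℝ × W) := ⋃ q : ℚ, (Ioi (q : ℝ)) ×ˢ B q with hAlow
  have hAlowm : MeasurableSet Alow :=
    MeasurableSet.iUnion fun q => measurableSet_Ioi.prod (hBm q)
  set D : Set ℝ := {t : ℝ | 0 < μ {t}} with hD
  have hDcount : D.Countable := by
    have := Measure.countable_meas_pos_of_disjoint_iUnion (μ := μ)
      (As := fun t : ℝ => {t}) (fun t => measurableSet_singleton t)
      (fun s t hst => by simpa [Function.onFun] using disjoint_singleton.2 hst)
    simpa using this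
  set Atom : Set (ℝ × W) := ⋃ t ∈ D, ({t} : Set ℝ) ×ˢ Asec t with hAtom
  have hAtomA : Atom ⊆ A := by
    intro p hp
    simp only [hAtom, mem_iUnion] at hp
    obtain ⟨t, _, hp⟩ := hp
    obtain ⟨h1, h2⟩ := hp
    have : p = (t, p.2) := by
      ext
      · exact h1
      · rfl
    rw [this]; exact h2
  have hAtomNM : NullMeasurableSet Atom (μ.prod π) := by
    have : Countable D := hDcount.to_subtype
    have : Atom = ⋃ t : D, ({(t : ℝ)} : Set ℝ) ×ˢ Asec t := by
      simp [hAtom, iUnion_subtype]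
    rw [this]
    refine NullMeasurableSet.iUnion fun t => ?_
    obtain ⟨C, hCm, hCe⟩ := oracle _ (hsec_upper (t : ℝ))
    refine NullMeasurableSet.congr (s := ({(t:ℝ)} : Set ℝ) ×ˢ C) ((measurableSet_singleton _).prod hCm).nullMeasurableSet ?_
    -- {t} ×ˢ C =ᵐ {t} ×ˢ Asec t
    have : ({(t:ℝ)} ×ˢ Asec (t:ℝ)) \ ({(t:ℝ)} ×ˢ C) ∪ ({(t:ℝ)} ×ˢ C) \ ({(t:ℝ)} ×ˢ Asec (t:ℝ))
        ⊆ univ ×ˢ (toMeasurable π ((Asec (t:ℝ) \ C) ∪ (C \ Asec (t:ℝ)))) := by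
      intro p hp
      rcases hp with hp | hp
      · exact ⟨trivial, subset_toMeasurable _ _ (Or.inl ⟨hp.1.2, fun h => hp.2 ⟨hp.1.1, h⟩⟩)⟩
      · exact ⟨trivial, subset_toMeasurable _ _ (Or.inr ⟨hp.1.2, fun h => hp.2 ⟨hp.1.1, h⟩⟩)⟩
    have hnull : (μ.prod π) (univ ×ˢ (toMeasurable π ((Asec (t:ℝ) \ C) ∪ (C \ Asec (t:ℝ))))) = 0 := by
      rw [Measure.prod_prod, measure_toMeasurable]
      have h := ae_eq_set.1 hCe
      rw [measure_union_null h.1 h.2, mul_zero]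
    refine (ae_eq_set.2 ⟨?_, ?_⟩).symm
    · exact measure_mono_null (fun p hp => this (Or.inl hp)) hnull
    · exact measure_mono_null (fun p hp => this (Or.inr hp)) hnull
  -- graph set
  set G : Set (ℝ × W) :=
    {p : ℝ × W | (∀ q : ℚ, (q : ℝ) < p.1 → p.2 ∉ B q) ∧ (∀ q : ℚ, p.1 < (q : ℝ) → p.2 ∈ B q)}
    with hG
  have hGm : MeasurableSet G := by
    have hGeq : G = (⋂ q : ℚ, ((Ioi (q:ℝ)) ×ˢ B q)ᶜ) ∩ (⋂ q : ℚ, ((Iio (q:ℝ)) ×ˢ (B q)ᶜ)ᶜ) := by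
      ext p
      simp only [hG, mem_setOf_eq, mem_inter_iff, mem_iInter, mem_compl_iff, mem_prod,
        mem_Ioi, mem_Iio, not_and, not_not]
    rw [hGeq]
    exact (MeasurableSet.iInter fun q => (measurableSet_Ioi.prod (hBm q)).compl).inter
      (MeasurableSet.iInter fun q => (measurableSet_Iio.prod (hBm q).compl).compl)
  have hGmem : ∀ p : ℝ × W, p ∈ G ↔
      (∀ q : ℚ, (q : ℝ) < p.1 → p.2 ∉ B q) ∧ (∀ q : ℚ, p.1 < (q:ℝ) → p.2 ∈ B q) :=
    fun p => Iff.rfl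
  set Gna : Set (ℝ × W) := G ∩ (Dᶜ ×ˢ univ) with hGna
  have hGnam : MeasurableSet Gna := hGm.inter ((hDcount.measurableSet.compl).prod MeasurableSet.univ)
  have hGnanull : (μ.prod π) Gna = 0 := by
    rw [Measure.prod_apply_symm hGnam]
    have : ∀ w : W, μ ((fun t => (t, w)) ⁻¹' Gna) = 0 := by
      intro w
      have hsub : (fun t => (t, w)) ⁻¹' Gna ⊆ {t | (t, w) ∈ G} ∩ Dᶜ := by
        intro t ht; exact ⟨ht.1, ht.2.1⟩
      have hss : ({t | (t, w) ∈ G}).Subsingleton := by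
        intro t1 h1 t2 h2
        by_contra hne
        rcases lt_or_gt_of_ne hne with hlt | hlt
        · obtain ⟨q, hq1, hq2⟩ := exists_rat_btwn hlt
          exact ((hGmem (t2, w)).1 h2).1 q hq2 (((hGmem (t1, w)).1 h1).2 q hq1)
        · obtain ⟨q, hq1, hq2⟩ := exists_rat_btwn hlt
          exact ((hGmem (t1, w)).1 h1).1 q hq2 (((hGmem (t2, w)).1 h2).2 q hq1)
      rcases Set.Subsingleton.eq_empty_or_singleton hss with he | ⟨t0, ht0⟩
      · refine measure_mono_null hsub ?_
        rw [he, empty_inter, measure_empty]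
      · refine measure_mono_null hsub ?_
        rw [ht0]
        by_cases ht0D : t0 ∈ D
        · have : ({t0} : Set ℝ) ∩ Dᶜ = ∅ := by
            ext x; simp only [mem_inter_iff, mem_singleton_iff, mem_compl_iff, mem_empty_iff_false,
              iff_false, not_and]
            rintro rfl; simp [ht0D]
          rw [this, measure_empty]
        · refine measure_mono_null inter_subset_left ?_
          simpa [hD] using ht0D
    have hmeas : Measurable fun w => μ ((fun t => (t, w)) ⁻¹' Gna) := by
      have h2 : MeasurableSet (Prod.swap ⁻¹' Gna : Set (W × ℝ)) := hGnam.preimage measurable_swap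
      have h3 := measurable_measure_prodMk_left (ν := μ) h2
      exact h3
    exact lintegral_eq_zero_iff hmeas |>.2 (Filter.Eventually.of_forall this)
  -- the symm-diff bound
  set Z : Set (ℝ × W) := (univ ×ˢ toMeasurable π N) ∪ Gna with hZ
  have hZnull : (μ.prod π) Z = 0 := by
    refine measure_union_null ?_ hGnanull
    rw [Measure.prod_prod, measure_toMeasurable, hNnull, mul_zero]
  set T : Set (ℝ × W) := Alow ∪ Atom with hT
  have hTargetNM : NullMeasurableSet T (μ.prod π) :=
    hAlowm.nullMeasurableSet.union hAtomNM
  -- A \ (Alow ∪ Atom) ⊆ Z and (Alow ∪ Atom) \ A ⊆ Z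
  have hdiff1 : A \ T ⊆ Z := by
    intro p hp
    obtain ⟨hpA, hpT⟩ := hp
    by_cases hpN : p.2 ∈ N
    · exact Or.inl ⟨trivial, subset_toMeasurable _ _ hpN⟩
    · refine Or.inr ⟨(hGmem p).2 ⟨?_, ?_⟩, ?_, trivial⟩
      · intro q hq hqB
        exact hpT (Or.inl (mem_iUnion.2 ⟨q, hq, hqB⟩))
      · intro q hq
        have : p.2 ∈ Asec (q : ℝ) := hA hpA (le_of_lt hq) le_rfl
        by_contra hc
        exact hpN (mem_iUnion.2 ⟨q, Or.inl ⟨this, hc⟩⟩)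
      · intro hpD
        exact hpT (Or.inr (mem_iUnion.2 ⟨p.1, mem_iUnion.2 ⟨hpD, rfl, hpA⟩⟩))
  have hdiff2 : T \ A ⊆ Z := by
    intro p hp
    obtain ⟨hpT, hpA⟩ := hp
    rcases hpT with hpL | hpAt
    · obtain ⟨q, hq⟩ := mem_iUnion.1 hpL
      obtain ⟨hq1, hq2⟩ := hq
      by_cases hpN : p.2 ∈ N
      · exact Or.inl ⟨trivial, subset_toMeasurable _ _ hpN⟩
      · exfalso
        have hpAsec : p.2 ∈ Asec (q : ℝ) := by
          by_contra hc
          exact hpN (mem_iUnion.2 ⟨q, Or.inr ⟨hq2, hc⟩⟩)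
        exact hpA (hA hpAsec (le_of_lt hq1) le_rfl)
    · exact absurd (hAtomA hpAt) hpA
  have hae : A =ᵐ[μ.prod π] T := by
    refine ae_eq_set.2 ⟨measure_mono_null hdiff1 hZnull, measure_mono_null hdiff2 hZnull⟩
  exact hTargetNM.congr hae.symm

end T1

lemma upper_nullMeasurable : ∀ (K : ℕ) (lam : Fin K → Measure ℝ),
    (∀ k, IsProbabilityMeasure (lam k)) → ∀ A : Set (Fin K → ℝ), IsUpper2 A →
    NullMeasurableSet A (Measure.pi lam) := by
  intro K
  induction K with
  | zero =>
    intro lam _ A _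
    rcases eq_empty_or_nonempty A with rfl | ⟨a, ha⟩
    · exact MeasurableSet.empty.nullMeasurableSet
    · have : A = univ := eq_univ_of_forall fun x => (Subsingleton.elim a x) ▸ ha
      rw [this]; exact MeasurableSet.univ.nullMeasurableSet
  | succ K IH =>
    intro lam hlam A hA
    haveI := hlam
    set e := MeasurableEquiv.piFinSuccAbove (fun _ : Fin (K+1) => ℝ) 0 with he
    have mp := measurePreserving_piFinSuccAbove lam 0
    set lam' : Fin K → Measure ℝ := fun j => lam ((0 : Fin (K+1)).succAbove j) with hlam'
    haveI : ∀ j, IsProbabilityMeasure (lam' j) := fun j => hlam _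
    set A' : Set (ℝ × (Fin K → ℝ)) := e.symm ⁻¹' A with hA'def
    have hesymm : ∀ (a : ℝ) (v : Fin K → ℝ), e.symm (a, v) = Fin.cons a v := by
      intro a v
      show (Fin.insertNthEquiv (fun _ : Fin (K+1) => ℝ) 0) (a, v) = Fin.cons a v
      simp [Fin.insertNthEquiv, Fin.insertNth_zero']
    have hA' : ∀ ⦃p q : ℝ × (Fin K → ℝ)⦄, p ∈ A' → p.1 ≤ q.1 → p.2 ≤ q.2 → q ∈ A' := by
      intro p q hp h1 h2
      have hmem : e.symm p ∈ A := hp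
      have hle : e.symm p ≤ e.symm q := by
        rw [show p = (p.1, p.2) from rfl, show q = (q.1, q.2) from rfl, hesymm, hesymm]
        intro j
        refine Fin.cases ?_ ?_ j
        · simpa using h1
        · intro i; simpa using h2 i
      exact hA hmem hle
    have hstep := step_null (lam 0) (Measure.pi lam')
      (fun C hC => IH lam' (fun j => hlam _) C hC) A' hA'
    have hAeq : A = e ⁻¹' A' := by
      rw [hA'def]
      rw [← Set.preimage_comp]
      simp
    rw [hAeq]
    exact hstep.preimage mp.quasiMeasurePreserving

lemma sup_rat_ofReal (a : ℝ) :
    (⨆ q : ℚ, if (q:ℝ) < a then ENNReal.ofReal q else 0) = ENNReal.ofReal a := by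
  apply le_antisymm
  · refine iSup_le fun q => ?_
    split_ifs with h
    · exact ENNReal.ofReal_le_ofReal h.le
    · exact zero_le
  · rcases le_or_gt a 0 with ha | ha
    · simp [ENNReal.ofReal_eq_zero.2 ha]
    · refine ENNReal.le_of_forall_pos_le_add fun ε hε _ => ?_
      have hlt : a - (ε : ℝ) < a := by
        have : (0:ℝ) < ε := hε
        linarith
      obtain ⟨q, hq1, hq2⟩ := exists_rat_btwn hlt
      calc ENNReal.ofReal a ≤ ENNReal.ofReal ((q:ℝ) + ε) := by
            apply ENNReal.ofReal_le_ofReal; linarith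
        _ ≤ ENNReal.ofReal q + ENNReal.ofReal ε := ENNReal.ofReal_add_le
        _ ≤ (⨆ q' : ℚ, if (q':ℝ) < a then ENNReal.ofReal q' else 0) + ε := by
            gcongr
            · refine le_trans ?_ (le_iSup _ q)
              rw [if_pos hq2]
            · simp

lemma monotone_aemeasurable {K : ℕ} (lam : Fin K → Measure ℝ)
    [hP : ∀ k, IsProbabilityMeasure (lam k)]
    (f : (Fin K → ℝ) → ℝ) (hf : Monotone f) (h0 : ∀ v, 0 ≤ f v) :
    AEMeasurable f (Measure.pi lam) := by
  classical
  have hup : ∀ q : ℚ, IsUpper2 {v | (q:ℝ) < f v} :=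
    fun q x y hx hxy => lt_of_lt_of_le hx (hf hxy)
  have hnm : ∀ q : ℚ, NullMeasurableSet {v | (q:ℝ) < f v} (Measure.pi lam) :=
    fun q => upper_nullMeasurable K lam hP _ (hup q)
  set B : ℚ → Set (Fin K → ℝ) := fun q => toMeasurable (Measure.pi lam) {v | (q:ℝ) < f v} with hB
  have hBm : ∀ q, MeasurableSet (B q) := fun q => measurableSet_toMeasurable _ _
  have hBe : ∀ q : ℚ, {v | (q:ℝ) < f v} =ᵐ[Measure.pi lam] B q :=
    fun q => ((hnm q).toMeasurable_ae_eq).symm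
  set N : Set (Fin K → ℝ) :=
    ⋃ q : ℚ, ({v | (q:ℝ) < f v} \ B q) ∪ (B q \ {v | (q:ℝ) < f v}) with hN
  have hNnull : Measure.pi lam N = 0 := by
    refine measure_iUnion_null fun q => ?_
    have h := ae_eq_set.1 (hBe q)
    exact measure_union_null h.1 h.2
  set g : (Fin K → ℝ) → ℝ≥0∞ := fun v => ⨆ q : ℚ, (B q).indicator (fun _ => ENNReal.ofReal q) v
    with hg
  have hgm : Measurable g := by
    refine Measurable.iSup fun q => Measurable.indicator measurable_const (hBm q)
  refine ⟨fun v => (g v).toReal, hgm.ennreal_toReal, ?_⟩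
  have : ∀ v ∉ N, f v = (g v).toReal := by
    intro v hv
    have hiff : ∀ q : ℚ, v ∈ B q ↔ (q:ℝ) < f v := by
      intro q
      constructor
      · intro h
        by_contra hc
        exact hv (mem_iUnion.2 ⟨q, Or.inr ⟨h, hc⟩⟩)
      · intro h
        by_contra hc
        exact hv (mem_iUnion.2 ⟨q, Or.inl ⟨h, hc⟩⟩)
    have : g v = ENNReal.ofReal (f v) := by
      rw [hg]
      simp only [indicator]
      rw [← sup_rat_ofReal (f v)]
      congr 1
      ext q
      by_cases h : v ∈ B q
      · rw [if_pos h, if_pos ((hiff q).1 h)]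
      · rw [if_neg h, if_neg (fun hc => h ((hiff q).2 hc))]
    rw [this, ENNReal.toReal_ofReal (h0 v)]
  have hNae : ∀ᵐ v ∂(Measure.pi lam), v ∉ N :=
    (ae_iff.2 (by simpa using hNnull))
  filter_upwards [hNae] with v hv using this v hv

-- marginal projections of pi measures
lemma pi_map_proj {K : ℕ} (ν : Fin K → Measure (ℝ × ℝ))
    [hP : ∀ k, IsProbabilityMeasure (ν k)] (g : ℝ × ℝ → ℝ) (hg : Measurable g) :
    (Measure.pi ν).map (fun w k => g (w k)) = Measure.pi (fun k => (ν k).map g) := by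
  haveI : ∀ k, IsProbabilityMeasure ((ν k).map g) :=
    fun k => Measure.isProbabilityMeasure_map hg.aemeasurable
  have hmeas : Measurable (fun (w : Fin K → ℝ × ℝ) k => g (w k)) :=
    measurable_pi_lambda _ fun k => hg.comp (measurable_pi_apply k)
  refine (Measure.pi_eq fun s hs => ?_).symm
  rw [Measure.map_apply hmeas (MeasurableSet.univ_pi hs)]
  have : (fun (w : Fin K → ℝ × ℝ) k => g (w k)) ⁻¹' (Set.pi univ s)
      = Set.pi univ (fun k => g ⁻¹' s k) := by
    ext w; simp [Set.mem_pi]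
  rw [this, Measure.pi_pi]
  congr 1
  ext k
  rw [Measure.map_apply hg (hs k)]

def NQD2 (ν : Measure (ℝ × ℝ)) : Prop :=
  ∀ y z : ℝ, ν (Iic y ×ˢ Iic z) ≤ ν (Iic y ×ˢ univ) * ν (univ ×ˢ Iic z)

section Ray
variable (ν : Measure (ℝ × ℝ)) [IsProbabilityMeasure ν]

lemma nqd2_Ioi (h : NQD2 ν) (a b : ℝ) :
    ν (Ioi a ×ˢ Ioi b) ≤ ν (Ioi a ×ˢ univ) * ν (univ ×ˢ Ioi b) := by
  have hIa : (Ioi a ×ˢ (univ : Set ℝ)) = (Iic a ×ˢ (univ : Set ℝ))ᶜ := by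
    ext p; simp [not_le]
  have hIb : ((univ : Set ℝ) ×ˢ Ioi b) = ((univ : Set ℝ) ×ˢ Iic b)ᶜ := by
    ext p; simp [not_le]
  have hIab : (Ioi a ×ˢ Ioi b) = ((Iic a ×ˢ (univ : Set ℝ)) ∪ ((univ : Set ℝ) ×ˢ Iic b))ᶜ := by
    ext p; simp [not_or, not_le]
  set X : Set (ℝ × ℝ) := Iic a ×ˢ (univ : Set ℝ) with hX
  set Y : Set (ℝ × ℝ) := (univ : Set ℝ) ×ˢ Iic b with hY
  have hXm : MeasurableSet X := measurableSet_Iic.prod MeasurableSet.univ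
  have hYm : MeasurableSet Y := MeasurableSet.univ.prod measurableSet_Iic
  have hinter : X ∩ Y = Iic a ×ˢ Iic b := by
    rw [hX, hY, Set.prod_inter_prod, Set.inter_univ, Set.univ_inter]
  -- real-valued quantities
  set x := (ν X).toReal with hxdef
  set y := (ν Y).toReal with hydef
  set w := (ν (Iic a ×ˢ Iic b)).toReal with hwdef
  have hw : w ≤ x * y := by
    rw [hxdef, hydef, hwdef, ← ENNReal.toReal_mul]
    exact ENNReal.toReal_mono (ENNReal.mul_ne_top (measure_ne_top _ _) (measure_ne_top _ _)) (h a b)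
  have huni : (ν (X ∪ Y)).toReal = x + y - w := by
    have := measure_union_add_inter (μ := ν) (s := X) hYm
    rw [hinter] at this
    have h1 : ν (X ∪ Y) ≠ ⊤ := measure_ne_top _ _
    have h2 : ν (Iic a ×ˢ Iic b) ≠ ⊤ := measure_ne_top _ _
    have := congrArg ENNReal.toReal this
    rw [ENNReal.toReal_add h1 h2, ENNReal.toReal_add (measure_ne_top _ _) (measure_ne_top _ _)]
      at this
    rw [hxdef, hydef, hwdef]; linarith
  have hcompl : ∀ S : Set (ℝ × ℝ), MeasurableSet S → (ν Sᶜ).toReal = 1 - (ν S).toReal := by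
    intro S hS
    rw [measure_compl hS (measure_ne_top _ _), measure_univ,
      ENNReal.toReal_sub_of_le prob_le_one ENNReal.one_ne_top, ENNReal.toReal_one]
  have hxy1 : (ν (Ioi a ×ˢ Ioi b)).toReal = 1 - (x + y - w) := by
    rw [hIab, hcompl _ (hXm.union hYm), huni]
  have hx1 : (ν (Ioi a ×ˢ (univ : Set ℝ))).toReal = 1 - x := by rw [hIa, hcompl _ hXm]
  have hy1 : (ν ((univ : Set ℝ) ×ˢ Ioi b)).toReal = 1 - y := by rw [hIb, hcompl _ hYm]
  have hfin : (ν (Ioi a ×ˢ (univ:Set ℝ))) * (ν ((univ:Set ℝ) ×ˢ Ioi b)) ≠ ⊤ :=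
    ENNReal.mul_ne_top (measure_ne_top _ _) (measure_ne_top _ _)
  rw [← ENNReal.toReal_le_toReal (measure_ne_top _ _) hfin, ENNReal.toReal_mul, hxy1, hx1, hy1]
  have hx0 : 0 ≤ x := ENNReal.toReal_nonneg
  have hy0 : 0 ≤ y := ENNReal.toReal_nonneg
  nlinarith [hw]

lemma isUpper2_real_cases (U : Set ℝ) (hU : IsUpper2 U) :
    U = ∅ ∨ U = univ ∨ ∃ c : ℕ → ℝ, Monotone c ∧ U = ⋂ n, Ioi (c n) := by
  rcases eq_empty_or_nonempty U with h | hne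
  · exact Or.inl h
  by_cases hbdd : BddBelow U
  · right; right
    set a := sInf U with ha
    have hsub : U ⊆ Ici a := fun u hu => csInf_le hbdd hu
    have hIoi : Ioi a ⊆ U := by
      intro x hx
      obtain ⟨u, hu, hux⟩ := (csInf_lt_iff hbdd hne).1 hx
      exact hU hu hux.le
    by_cases haU : a ∈ U
    · refine ⟨fun n => a - 1/(n+1), ?_, ?_⟩
      · intro m n hmn
        have : (1:ℝ)/(n+1) ≤ 1/(m+1) := by
          apply one_div_le_one_div_of_le
          · positivity
          · exact_mod_cast Nat.succ_le_succ hmn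
        linarith
      · apply Subset.antisymm
        · intro u hu
          simp only [mem_iInter, mem_Ioi]
          intro n
          have : a ≤ u := hsub hu
          have hpos : (0:ℝ) < 1/(n+1) := by positivity
          linarith
        · intro u hu
          simp only [mem_iInter, mem_Ioi] at hu
          have hau : a ≤ u := by
            by_contra hc
            push_neg at hc
            obtain ⟨n, hn⟩ := exists_nat_one_div_lt (show (0:ℝ) < a - u by linarith)
            have := hu n
            have : (1:ℝ)/(n+1) < a - u := by exact_mod_cast hn
            linarith [hu n]
          rcases eq_or_lt_of_le hau with rfl | hlt
          · exact haU
          · exact hIoi hlt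
    · refine ⟨fun _ => a, monotone_const, ?_⟩
      have : U = Ioi a := by
        apply Subset.antisymm
        · intro u hu
          rcases eq_or_lt_of_le (show a ≤ u from hsub hu) with rfl | h
          · exact absurd hu haU
          · exact h
        · exact hIoi
      rw [this, iInter_const]
  · right; left
    apply eq_univ_of_forall
    intro x
    rw [bddBelow_def] at hbdd
    push_neg at hbdd
    obtain ⟨u, hu, hux⟩ := hbdd x
    exact hU hu hux.le

lemma nqd2_upper (h : NQD2 ν) (U V : Set ℝ) (hU : IsUpper2 U) (hV : IsUpper2 V) :
    ν (U ×ˢ V) ≤ ν (U ×ˢ univ) * ν (univ ×ˢ V) := by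
  rcases isUpper2_real_cases U hU with rfl | rfl | ⟨c, hc, rfl⟩
  · simp
  · have h1 : ((univ : Set ℝ) ×ˢ V) = ((univ : Set ℝ) ×ˢ (univ:Set ℝ)) ∩ (univ ×ˢ V) := by
      simp
    simp [univ_prod_univ]
  rcases isUpper2_real_cases V hV with rfl | rfl | ⟨d, hd, rfl⟩
  · simp
  · simp [univ_prod_univ, prod_univ]
  · -- main case
    set U := ⋂ n, Ioi (c n) with hUdef
    set V := ⋂ n, Ioi (d n) with hVdef
    have hUV : U ×ˢ V = ⋂ n, (Ioi (c n) ×ˢ Ioi (d n)) := by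
      ext p
      simp only [hUdef, hVdef, mem_prod, mem_iInter, mem_Ioi]
      exact ⟨fun ⟨h1, h2⟩ i => ⟨h1 i, h2 i⟩, fun h => ⟨fun i => (h i).1, fun i => (h i).2⟩⟩
    have hU1 : U ×ˢ (univ : Set ℝ) = ⋂ n, (Ioi (c n) ×ˢ (univ : Set ℝ)) := by
      ext p
      simp only [hUdef, mem_prod, mem_iInter, mem_Ioi, mem_univ, and_true]
    have hV1 : (univ : Set ℝ) ×ˢ V = ⋂ n, ((univ : Set ℝ) ×ˢ Ioi (d n)) := by
      ext p
      simp only [hVdef, mem_prod, mem_iInter, mem_Ioi, mem_univ, true_and]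
    have anti1 : Antitone fun n => Ioi (c n) ×ˢ Ioi (d n) := by
      intro m n hmn p hp
      exact ⟨lt_of_le_of_lt (hc hmn) hp.1, lt_of_le_of_lt (hd hmn) hp.2⟩
    have anti2 : Antitone fun n => Ioi (c n) ×ˢ (univ : Set ℝ) := by
      intro m n hmn p hp
      exact ⟨lt_of_le_of_lt (hc hmn) hp.1, trivial⟩
    have anti3 : Antitone fun n => (univ : Set ℝ) ×ˢ Ioi (d n) := by
      intro m n hmn p hp
      exact ⟨trivial, lt_of_le_of_lt (hd hmn) hp.2⟩
    have t1 : Filter.Tendsto (fun n => ν (Ioi (c n) ×ˢ Ioi (d n))) Filter.atTop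
        (nhds (ν (U ×ˢ V))) := by
      rw [hUV]
      exact tendsto_measure_iInter_atTop
        (fun n => (measurableSet_Ioi.prod measurableSet_Ioi).nullMeasurableSet)
        anti1 ⟨0, measure_ne_top _ _⟩
    have t2 : Filter.Tendsto (fun n => ν (Ioi (c n) ×ˢ (univ:Set ℝ))) Filter.atTop
        (nhds (ν (U ×ˢ (univ:Set ℝ)))) := by
      rw [hU1]
      exact tendsto_measure_iInter_atTop
        (fun n => (measurableSet_Ioi.prod MeasurableSet.univ).nullMeasurableSet)
        anti2 ⟨0, measure_ne_top _ _⟩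
    have t3 : Filter.Tendsto (fun n => ν ((univ:Set ℝ) ×ˢ Ioi (d n))) Filter.atTop
        (nhds (ν ((univ:Set ℝ) ×ˢ V))) := by
      rw [hV1]
      exact tendsto_measure_iInter_atTop
        (fun n => (MeasurableSet.univ.prod measurableSet_Ioi).nullMeasurableSet)
        anti3 ⟨0, measure_ne_top _ _⟩
    have t4 : Filter.Tendsto
        (fun n => ν (Ioi (c n) ×ˢ (univ:Set ℝ)) * ν ((univ:Set ℝ) ×ˢ Ioi (d n))) Filter.atTop
        (nhds (ν (U ×ˢ (univ:Set ℝ)) * ν ((univ:Set ℝ) ×ˢ V))) := by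
      exact ENNReal.Tendsto.mul t2 (Or.inr (measure_ne_top _ _)) t3
        (Or.inr (measure_ne_top _ _))
    exact le_of_tendsto_of_tendsto' t1 t4 fun n => nqd2_Ioi ν h (c n) (d n)

end Ray

section Layer

noncomputable def mI : Measure ℝ := volume.restrict (Ioo (0:ℝ) 1)

instance : IsProbabilityMeasure mI :=
  ⟨by rw [mI, Measure.restrict_apply MeasurableSet.univ, univ_inter, Real.volume_Ioo]; simp⟩

lemma key_layer (a : ℝ) (h1 : a ≤ 1) :
    ∫⁻ s, (if s < a then (1:ℝ≥0∞) else 0) ∂mI = ENNReal.ofReal a := by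
  have : (fun s => if s < a then (1:ℝ≥0∞) else 0) = (Iio a).indicator (1 : ℝ → ℝ≥0∞) := by
    funext s; simp [indicator, Set.mem_Iio]
  rw [this, lintegral_indicator_one measurableSet_Iio, mI,
    Measure.restrict_apply measurableSet_Iio]
  have : Iio a ∩ Ioo (0:ℝ) 1 = Ioo 0 a := by
    ext x
    constructor
    · rintro ⟨h1x, h2x, h3x⟩; exact ⟨h2x, h1x⟩
    · rintro ⟨h1x, h2x⟩; exact ⟨h2x, h1x, lt_of_lt_of_le h2x h1⟩
  rw [this, Real.volume_Ioo, sub_zero]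

lemma prod_layer {α : Type*} [MeasurableSpace α] (ν : Measure α) [IsProbabilityMeasure ν]
    (u v : α → ℝ) (hu : Measurable u) (hv : Measurable v)
    (hu0 : ∀ x, 0 ≤ u x) (hu1 : ∀ x, u x ≤ 1) (hv0 : ∀ x, 0 ≤ v x) (hv1 : ∀ x, v x ≤ 1) :
    ∫⁻ p, ENNReal.ofReal (u p) * ENNReal.ofReal (v p) ∂ν
      = ∫⁻ s, ∫⁻ t, ν ({p | s < u p} ∩ {p | t < v p}) ∂mI ∂mI := by
  have meas1 : Measurable (Function.uncurry fun p s =>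
      (if s < u p then (1:ℝ≥0∞) else 0) * ENNReal.ofReal (v p)) := by
    apply Measurable.mul
    · exact Measurable.ite (measurableSet_lt measurable_snd (hu.comp measurable_fst))
        measurable_const measurable_const
    · exact (ENNReal.measurable_ofReal.comp (hv.comp measurable_fst))
  have meas2 : ∀ s : ℝ, Measurable (Function.uncurry fun p t =>
      (if s < u p then (1:ℝ≥0∞) else 0) * (if t < v p then (1:ℝ≥0∞) else 0)) := by
    intro s
    apply Measurable.mul
    · exact Measurable.ite
        ((hu.comp measurable_fst) measurableSet_Ioi) measurable_const measurable_const
    · exact Measurable.ite (measurableSet_lt measurable_snd (hv.comp measurable_fst))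
        measurable_const measurable_const
  calc ∫⁻ p, ENNReal.ofReal (u p) * ENNReal.ofReal (v p) ∂ν
      = ∫⁻ p, ∫⁻ s, (if s < u p then (1:ℝ≥0∞) else 0) * ENNReal.ofReal (v p) ∂mI ∂ν := by
        refine lintegral_congr fun p => ?_
        rw [lintegral_mul_const' _ _ ENNReal.ofReal_ne_top, key_layer _ (hu1 p)]
    _ = ∫⁻ s, ∫⁻ p, (if s < u p then (1:ℝ≥0∞) else 0) * ENNReal.ofReal (v p) ∂ν ∂mI :=
        lintegral_lintegral_swap meas1.aemeasurable
    _ = ∫⁻ s, ∫⁻ p, ∫⁻ t, (if s < u p then (1:ℝ≥0∞) else 0) * (if t < v p then (1:ℝ≥0∞) else 0)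
          ∂mI ∂ν ∂mI := by
        refine lintegral_congr fun s => lintegral_congr fun p => ?_
        rw [lintegral_const_mul' _ _ (by split_ifs <;> simp), key_layer _ (hv1 p)]
    _ = ∫⁻ s, ∫⁻ t, ∫⁻ p, (if s < u p then (1:ℝ≥0∞) else 0) * (if t < v p then (1:ℝ≥0∞) else 0)
          ∂ν ∂mI ∂mI := by
        refine lintegral_congr fun s => ?_
        exact lintegral_lintegral_swap (meas2 s).aemeasurable
    _ = ∫⁻ s, ∫⁻ t, ν ({p | s < u p} ∩ {p | t < v p}) ∂mI ∂mI := by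
        refine lintegral_congr fun s => lintegral_congr fun t => ?_
        have : (fun p => (if s < u p then (1:ℝ≥0∞) else 0) * (if t < v p then (1:ℝ≥0∞) else 0))
            = ({p | s < u p} ∩ {p | t < v p}).indicator (1 : α → ℝ≥0∞) := by
          funext p
          by_cases h1 : s < u p <;> by_cases h2 : t < v p <;>
            simp [indicator, h1, h2, mem_setOf_eq]
        rw [this, lintegral_indicator_one
          (show MeasurableSet ({p | s < u p} ∩ {p | t < v p}) from
            (hu measurableSet_Ioi).inter (hv measurableSet_Ioi))]

lemma single_layer {α : Type*} [MeasurableSpace α] (ν : Measure α) [IsProbabilityMeasure ν]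
    (u : α → ℝ) (hu : Measurable u) (hu1 : ∀ x, u x ≤ 1) :
    ∫⁻ p, ENNReal.ofReal (u p) ∂ν = ∫⁻ s, ν {p | s < u p} ∂mI := by
  have meas1 : Measurable (Function.uncurry fun p s =>
      (if s < u p then (1:ℝ≥0∞) else 0)) :=
    Measurable.ite (measurableSet_lt measurable_snd (hu.comp measurable_fst))
      measurable_const measurable_const
  calc ∫⁻ p, ENNReal.ofReal (u p) ∂ν
      = ∫⁻ p, ∫⁻ s, (if s < u p then (1:ℝ≥0∞) else 0) ∂mI ∂ν := by
        refine lintegral_congr fun p => ?_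
        rw [key_layer _ (hu1 p)]
    _ = ∫⁻ s, ∫⁻ p, (if s < u p then (1:ℝ≥0∞) else 0) ∂ν ∂mI :=
        lintegral_lintegral_swap meas1.aemeasurable
    _ = ∫⁻ s, ν {p | s < u p} ∂mI := by
        refine lintegral_congr fun s => ?_
        have : (fun p => (if s < u p then (1:ℝ≥0∞) else 0))
            = ({p | s < u p}).indicator (1 : α → ℝ≥0∞) := by
          funext p; by_cases h1 : s < u p <;> simp [indicator, h1, mem_setOf_eq]
        rw [this, lintegral_indicator_one
          (show MeasurableSet {p | s < u p} from hu measurableSet_Ioi)]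

lemma two_var (ν : Measure (ℝ × ℝ)) [IsProbabilityMeasure ν] (h : NQD2 ν)
    (f g : ℝ → ℝ) (hf : Monotone f) (hg : Monotone g)
    (hf0 : ∀ x, 0 ≤ f x) (hf1 : ∀ x, f x ≤ 1) (hg0 : ∀ x, 0 ≤ g x) (hg1 : ∀ x, g x ≤ 1) :
    ∫ p, f p.1 * g p.2 ∂ν ≤ (∫ p, f p.1 ∂ν) * ∫ p, g p.2 ∂ν := by
  have hfm : Measurable f := hf.measurable
  have hgm : Measurable g := hg.measurable
  set u : ℝ × ℝ → ℝ := fun p => f p.1 with hudef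
  set v : ℝ × ℝ → ℝ := fun p => g p.2 with hvdef
  have hum : Measurable u := hfm.comp measurable_fst
  have hvm : Measurable v := hgm.comp measurable_snd
  -- lintegral versions
  have hA : ∀ s t : ℝ, ({p | s < u p} ∩ {p | t < v p} : Set (ℝ × ℝ))
      = {x | s < f x} ×ˢ {x | t < g x} := by
    intro s t; ext p; simp [hudef, hvdef, mem_prod, mem_setOf_eq, and_comm]
  have hAU : ∀ s : ℝ, ({p | s < u p} : Set (ℝ × ℝ)) = {x | s < f x} ×ˢ univ := by
    intro s; ext p; simp [hudef, mem_prod, mem_setOf_eq]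
  have hAV : ∀ t : ℝ, ({p | t < v p} : Set (ℝ × ℝ)) = univ ×ˢ {x | t < g x} := by
    intro t; ext p; simp [hvdef, mem_prod, mem_setOf_eq]
  have main : ∫⁻ p, ENNReal.ofReal (u p) * ENNReal.ofReal (v p) ∂ν
      ≤ (∫⁻ p, ENNReal.ofReal (u p) ∂ν) * ∫⁻ p, ENNReal.ofReal (v p) ∂ν := by
    rw [prod_layer ν u v hum hvm (fun x => hf0 _) (fun x => hf1 _) (fun x => hg0 _)
      (fun x => hg1 _), single_layer ν u hum (fun x => hf1 _),
      single_layer ν v hvm (fun x => hg1 _)]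
    have step1 : ∫⁻ s, ∫⁻ t, ν ({p | s < u p} ∩ {p | t < v p}) ∂mI ∂mI
        ≤ ∫⁻ s, ∫⁻ t, ν ({p | s < u p}) * ν ({p | t < v p}) ∂mI ∂mI := by
      refine lintegral_mono fun s => lintegral_mono fun t => ?_
      rw [hA s t, hAU s, hAV t]
      exact nqd2_upper ν h _ _ (fun x y hx hxy => lt_of_lt_of_le hx (hf hxy))
        (fun x y hx hxy => lt_of_lt_of_le hx (hg hxy))
    refine le_trans step1 (le_of_eq ?_)
    have hBfin : ∫⁻ t, ν ({p | t < v p}) ∂mI ≠ ⊤ := by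
      refine ne_of_lt (lt_of_le_of_lt ?_ (by simp : (1:ℝ≥0∞) < ⊤))
      calc ∫⁻ t, ν ({p | t < v p}) ∂mI ≤ ∫⁻ _, 1 ∂mI :=
            lintegral_mono fun t => prob_le_one
        _ = 1 := by simp
    calc ∫⁻ s, ∫⁻ t, ν ({p | s < u p}) * ν ({p | t < v p}) ∂mI ∂mI
        = ∫⁻ s, ν ({p | s < u p}) * ∫⁻ t, ν ({p | t < v p}) ∂mI ∂mI := by
          refine lintegral_congr fun s => ?_
          exact lintegral_const_mul' _ _ (measure_ne_top _ _)
      _ = (∫⁻ s, ν ({p | s < u p}) ∂mI) * ∫⁻ t, ν ({p | t < v p}) ∂mI :=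
          lintegral_mul_const' _ _ hBfin
  -- convert to Bochner integrals
  have int1 : ∫ p, u p * v p ∂ν = (∫⁻ p, ENNReal.ofReal (u p) * ENNReal.ofReal (v p) ∂ν).toReal := by
    rw [integral_eq_lintegral_of_nonneg_ae
      (Filter.Eventually.of_forall fun p => mul_nonneg (hf0 _) (hg0 _))
      ((hum.mul hvm).aestronglyMeasurable)]
    congr 1
    exact lintegral_congr fun p => ENNReal.ofReal_mul (hf0 _)
  have int2 : ∫ p, u p ∂ν = (∫⁻ p, ENNReal.ofReal (u p) ∂ν).toReal := by
    rw [integral_eq_lintegral_of_nonneg_ae (Filter.Eventually.of_forall fun p => hf0 _)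
      hum.aestronglyMeasurable]
  have int3 : ∫ p, v p ∂ν = (∫⁻ p, ENNReal.ofReal (v p) ∂ν).toReal := by
    rw [integral_eq_lintegral_of_nonneg_ae (Filter.Eventually.of_forall fun p => hg0 _)
      hvm.aestronglyMeasurable]
  have hufin : ∫⁻ p, ENNReal.ofReal (u p) ∂ν ≠ ⊤ := by
    refine ne_of_lt (lt_of_le_of_lt ?_ (by simp : (1:ℝ≥0∞) < ⊤))
    calc ∫⁻ p, ENNReal.ofReal (u p) ∂ν ≤ ∫⁻ _, 1 ∂ν :=
          lintegral_mono fun p => by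
            simpa using ENNReal.ofReal_le_ofReal (hf1 _)
      _ = 1 := by simp
  have hvfin : ∫⁻ p, ENNReal.ofReal (v p) ∂ν ≠ ⊤ := by
    refine ne_of_lt (lt_of_le_of_lt ?_ (by simp : (1:ℝ≥0∞) < ⊤))
    calc ∫⁻ p, ENNReal.ofReal (v p) ∂ν ≤ ∫⁻ _, 1 ∂ν :=
          lintegral_mono fun p => by
            simpa using ENNReal.ofReal_le_ofReal (hg1 _)
      _ = 1 := by simp
  rw [show (fun p : ℝ × ℝ => f p.1 * g p.2) = fun p => u p * v p from rfl, int1, int2, int3,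
    ← ENNReal.toReal_mul]
  exact ENNReal.toReal_mono (ENNReal.mul_ne_top hufin hvfin) main

end Layer

section Core

lemma aem_comp_proj {K : ℕ} (ν : Fin K → Measure (ℝ × ℝ))
    (hP : ∀ k, IsProbabilityMeasure (ν k)) (g : ℝ × ℝ → ℝ) (hg : Measurable g)
    (G : (Fin K → ℝ) → ℝ) (hG : Monotone G) (hG0 : ∀ v, 0 ≤ G v) :
    AEMeasurable (fun w => G (fun k => g (w k))) (Measure.pi ν) := by
  haveI := hP
  haveI : ∀ k, IsProbabilityMeasure ((ν k).map g) :=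
    fun k => Measure.isProbabilityMeasure_map hg.aemeasurable
  have h2 : AEMeasurable G (Measure.pi fun k => (ν k).map g) :=
    monotone_aemeasurable _ G hG hG0
  rw [← pi_map_proj ν g hg] at h2
  exact h2.comp_measurable (measurable_pi_lambda _ fun k => hg.comp (measurable_pi_apply k))

lemma cons_le_cons {K : ℕ} {x x' : ℝ} {v v' : Fin K → ℝ} (hx : x ≤ x') (hv : v ≤ v') :
    (Fin.cons x v : Fin (K+1) → ℝ) ≤ Fin.cons x' v' := by
  intro k
  refine Fin.cases ?_ ?_ k
  · simpa using hx
  · intro j; simpa using hv j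

theorem core : ∀ (K : ℕ) (ν : Fin K → Measure (ℝ × ℝ)),
    (∀ k, IsProbabilityMeasure (ν k)) → (∀ k, NQD2 (ν k)) →
    ∀ (G1 G2 : (Fin K → ℝ) → ℝ), Monotone G1 → Monotone G2 →
    (∀ v, 0 ≤ G1 v) → (∀ v, G1 v ≤ 1) → (∀ v, 0 ≤ G2 v) → (∀ v, G2 v ≤ 1) →
    ∫ w, G1 (fun k => (w k).1) * G2 (fun k => (w k).2) ∂(Measure.pi ν)
      ≤ (∫ w, G1 (fun k => (w k).1) ∂(Measure.pi ν))
        * ∫ w, G2 (fun k => (w k).2) ∂(Measure.pi ν) := by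
  intro K
  induction K with
  | zero =>
    intro ν hP hNQD G1 G2 hG1m hG2m h10 h11 h20 h21
    haveI := hP
    haveI : IsProbabilityMeasure (Measure.pi ν) := by infer_instance
    set x0 : Fin 0 → ℝ := fun k => k.elim0 with hx0
    have e1 : (fun w : Fin 0 → ℝ × ℝ => G1 (fun k => (w k).1) * G2 (fun k => (w k).2))
        = fun _ => G1 x0 * G2 x0 := by
      funext w
      rw [Subsingleton.elim (fun k => (w k).1) x0, Subsingleton.elim (fun k => (w k).2) x0]
    have e2 : (fun w : Fin 0 → ℝ × ℝ => G1 (fun k => (w k).1)) = fun _ => G1 x0 := by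
      funext w; rw [Subsingleton.elim (fun k => (w k).1) x0]
    have e3 : (fun w : Fin 0 → ℝ × ℝ => G2 (fun k => (w k).2)) = fun _ => G2 x0 := by
      funext w; rw [Subsingleton.elim (fun k => (w k).2) x0]
    rw [e1, e2, e3, integral_const, integral_const, integral_const]
    simp
  | succ K IH =>
    intro ν hP hNQD G1 G2 hG1m hG2m h10 h11 h20 h21
    haveI := hP
    set ν' : Fin K → Measure (ℝ × ℝ) := fun j => ν ((0 : Fin (K+1)).succAbove j) with hν'
    haveI hP' : ∀ j, IsProbabilityMeasure (ν' j) := fun j => hP _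
    have hNQD' : ∀ j, NQD2 (ν' j) := fun j => hNQD _
    haveI : IsProbabilityMeasure (Measure.pi ν') := by infer_instance
    haveI : IsProbabilityMeasure (Measure.pi ν) := by infer_instance
    haveI : IsProbabilityMeasure (ν 0) := hP 0
    set e := MeasurableEquiv.piFinSuccAbove (fun _ : Fin (K+1) => ℝ × ℝ) 0 with he
    have mp : MeasurePreserving e (Measure.pi ν) ((ν 0).prod (Measure.pi ν')) :=
      measurePreserving_piFinSuccAbove ν 0
    have hesymm : ∀ (a : ℝ × ℝ) (w : Fin K → ℝ × ℝ), e.symm (a, w) = Fin.cons a w := by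
      intro a w
      show (Fin.insertNthEquiv (fun _ : Fin (K+1) => ℝ × ℝ) 0) (a, w) = Fin.cons a w
      simp [Fin.insertNthEquiv, Fin.insertNth_zero']
    have hconsY : ∀ (a : ℝ × ℝ) (w : Fin K → ℝ × ℝ),
        (fun k => ((Fin.cons a w : Fin (K+1) → ℝ × ℝ) k).1)
          = Fin.cons a.1 (fun j => ((w j).1)) := by
      intro a w; funext k
      refine Fin.cases ?_ ?_ k
      · simp
      · intro j; simp
    have hconsZ : ∀ (a : ℝ × ℝ) (w : Fin K → ℝ × ℝ),
        (fun k => ((Fin.cons a w : Fin (K+1) → ℝ × ℝ) k).2)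
          = Fin.cons a.2 (fun j => ((w j).2)) := by
      intro a w; funext k
      refine Fin.cases ?_ ?_ k
      · simp
      · intro j; simp
    -- the three functions on the (K+1)-product space and their prod-space versions
    set F : (Fin (K+1) → ℝ × ℝ) → ℝ :=
      fun w => G1 (fun k => (w k).1) * G2 (fun k => (w k).2) with hF
    set F1 : (Fin (K+1) → ℝ × ℝ) → ℝ := fun w => G1 (fun k => (w k).1) with hF1
    set F2 : (Fin (K+1) → ℝ × ℝ) → ℝ := fun w => G2 (fun k => (w k).2) with hF2
    have hF1aem : AEMeasurable F1 (Measure.pi ν) :=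
      aem_comp_proj ν hP Prod.fst measurable_fst G1 hG1m h10
    have hF2aem : AEMeasurable F2 (Measure.pi ν) :=
      aem_comp_proj ν hP Prod.snd measurable_snd G2 hG2m h20
    have hFaem : AEMeasurable F (Measure.pi ν) := hF1aem.mul hF2aem
    have mpsymm : MeasurePreserving e.symm ((ν 0).prod (Measure.pi ν')) (Measure.pi ν) :=
      mp.symm
    -- AEMeasurable on the product space
    have hFaem' : AEMeasurable (fun p => F (e.symm p)) ((ν 0).prod (Measure.pi ν')) :=
      hFaem.comp_quasiMeasurePreserving mpsymm.quasiMeasurePreserving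
    have hF1aem' : AEMeasurable (fun p => F1 (e.symm p)) ((ν 0).prod (Measure.pi ν')) :=
      hF1aem.comp_quasiMeasurePreserving mpsymm.quasiMeasurePreserving
    have hF2aem' : AEMeasurable (fun p => F2 (e.symm p)) ((ν 0).prod (Measure.pi ν')) :=
      hF2aem.comp_quasiMeasurePreserving mpsymm.quasiMeasurePreserving
    -- integrability on the product space
    have hbound : ∀ (u : (Fin (K+1) → ℝ × ℝ) → ℝ),
        AEMeasurable (fun p => u (e.symm p)) ((ν 0).prod (Measure.pi ν')) →
        (∀ w, 0 ≤ u w) → (∀ w, u w ≤ 1) →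
        Integrable (fun p => u (e.symm p)) ((ν 0).prod (Measure.pi ν')) := by
      intro u hu h0 h1
      refine (integrable_const (1:ℝ)).mono' hu.aestronglyMeasurable ?_
      refine Filter.Eventually.of_forall fun p => ?_
      rw [Real.norm_eq_abs, abs_of_nonneg (h0 _)]
      exact h1 _
    have hFint : Integrable (fun p => F (e.symm p)) ((ν 0).prod (Measure.pi ν')) :=
      hbound F hFaem' (fun w => mul_nonneg (h10 _) (h20 _))
        (fun w => mul_le_one₀ (h11 _) (h20 _) (h21 _))
    have hF1int : Integrable (fun p => F1 (e.symm p)) ((ν 0).prod (Measure.pi ν')) :=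
      hbound F1 hF1aem' (fun w => h10 _) (fun w => h11 _)
    have hF2int : Integrable (fun p => F2 (e.symm p)) ((ν 0).prod (Measure.pi ν')) :=
      hbound F2 hF2aem' (fun w => h20 _) (fun w => h21 _)
    -- ψ functions
    set ψ1 : ℝ → ℝ := fun y =>
      (∫⁻ w, ENNReal.ofReal (G1 (Fin.cons y (fun j => ((w j).1)))) ∂(Measure.pi ν')).toReal
      with hψ1
    set ψ2 : ℝ → ℝ := fun z =>
      (∫⁻ w, ENNReal.ofReal (G2 (Fin.cons z (fun j => ((w j).2)))) ∂(Measure.pi ν')).toReal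
      with hψ2
    have hlint_le_one : ∀ (u : (Fin K → ℝ × ℝ) → ℝ), (∀ w, u w ≤ 1) →
        ∫⁻ w, ENNReal.ofReal (u w) ∂(Measure.pi ν') ≤ 1 := by
      intro u h1
      calc ∫⁻ w, ENNReal.ofReal (u w) ∂(Measure.pi ν') ≤ ∫⁻ _, 1 ∂(Measure.pi ν') :=
            lintegral_mono fun w => by simpa using ENNReal.ofReal_le_ofReal (h1 w)
        _ = 1 := by simp
    have hψ1mono : Monotone ψ1 := by
      intro y y' hy
      apply ENNReal.toReal_mono
      · exact ne_of_lt (lt_of_le_of_lt (hlint_le_one _ fun w => h11 _) (by simp))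
      · exact lintegral_mono fun w =>
          ENNReal.ofReal_le_ofReal (hG1m (cons_le_cons hy le_rfl))
    have hψ2mono : Monotone ψ2 := by
      intro z z' hz
      apply ENNReal.toReal_mono
      · exact ne_of_lt (lt_of_le_of_lt (hlint_le_one _ fun w => h21 _) (by simp))
      · exact lintegral_mono fun w =>
          ENNReal.ofReal_le_ofReal (hG2m (cons_le_cons hz le_rfl))
    have hψ10 : ∀ y, 0 ≤ ψ1 y := fun y => ENNReal.toReal_nonneg
    have hψ20 : ∀ z, 0 ≤ ψ2 z := fun z => ENNReal.toReal_nonneg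
    have hψ11 : ∀ y, ψ1 y ≤ 1 := by
      intro y
      rw [hψ1]
      calc (∫⁻ w, ENNReal.ofReal (G1 (Fin.cons y (fun j => ((w j).1)))) ∂(Measure.pi ν')).toReal
          ≤ (1 : ℝ≥0∞).toReal :=
            ENNReal.toReal_mono (by simp) (hlint_le_one _ fun w => h11 _)
        _ = 1 := by simp
    have hψ21 : ∀ z, ψ2 z ≤ 1 := by
      intro z
      rw [hψ2]
      calc (∫⁻ w, ENNReal.ofReal (G2 (Fin.cons z (fun j => ((w j).2)))) ∂(Measure.pi ν')).toReal
          ≤ (1 : ℝ≥0∞).toReal :=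
            ENNReal.toReal_mono (by simp) (hlint_le_one _ fun w => h21 _)
        _ = 1 := by simp
    -- pointwise identification of ψ with inner integrals
    have haem1 : ∀ y : ℝ, AEMeasurable (fun w : Fin K → ℝ × ℝ =>
        G1 (Fin.cons y (fun j => ((w j).1)))) (Measure.pi ν') := by
      intro y
      exact aem_comp_proj ν' hP' Prod.fst measurable_fst (fun v => G1 (Fin.cons y v))
        (fun v v' hv => hG1m (cons_le_cons le_rfl hv)) (fun v => h10 _)
    have haem2 : ∀ z : ℝ, AEMeasurable (fun w : Fin K → ℝ × ℝ =>
        G2 (Fin.cons z (fun j => ((w j).2)))) (Measure.pi ν') := by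
      intro z
      exact aem_comp_proj ν' hP' Prod.snd measurable_snd (fun v => G2 (Fin.cons z v))
        (fun v v' hv => hG2m (cons_le_cons le_rfl hv)) (fun v => h20 _)
    have heq1 : ∀ y : ℝ, ∫ w, G1 (Fin.cons y (fun j => ((w j).1))) ∂(Measure.pi ν') = ψ1 y := by
      intro y
      rw [integral_eq_lintegral_of_nonneg_ae (Filter.Eventually.of_forall fun w => h10 _)
        (haem1 y).aestronglyMeasurable]
    have heq2 : ∀ z : ℝ, ∫ w, G2 (Fin.cons z (fun j => ((w j).2))) ∂(Measure.pi ν') = ψ2 z := by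
      intro z
      rw [integral_eq_lintegral_of_nonneg_ae (Filter.Eventually.of_forall fun w => h20 _)
        (haem2 z).aestronglyMeasurable]
    -- inner integral bound via IH
    have hinner : ∀ a : ℝ × ℝ, ∫ w, F (e.symm (a, w)) ∂(Measure.pi ν') ≤ ψ1 a.1 * ψ2 a.2 := by
      intro a
      have hre : (fun w => F (e.symm (a, w)))
          = fun w => (fun v => G1 (Fin.cons a.1 v)) (fun j => ((w j).1))
            * (fun v => G2 (Fin.cons a.2 v)) (fun j => ((w j).2)) := by
        funext w
        rw [hesymm a w, hF]
        simp only
        rw [hconsY a w, hconsZ a w]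
      rw [hre]
      refine le_trans (IH ν' hP' hNQD' (fun v => G1 (Fin.cons a.1 v))
        (fun v => G2 (Fin.cons a.2 v))
        (fun v v' hv => hG1m (cons_le_cons le_rfl hv))
        (fun v v' hv => hG2m (cons_le_cons le_rfl hv))
        (fun v => h10 _) (fun v => h11 _) (fun v => h20 _) (fun v => h21 _)) ?_
      rw [heq1 a.1, heq2 a.2]
    -- put everything together
    have trans1 : ∫ w, F w ∂(Measure.pi ν)
        = ∫ p, F (e.symm p) ∂((ν 0).prod (Measure.pi ν')) :=
      (mpsymm.integral_comp (MeasurableEquiv.measurableEmbedding e.symm) F).symm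
    have trans2 : ∫ w, F1 w ∂(Measure.pi ν)
        = ∫ p, F1 (e.symm p) ∂((ν 0).prod (Measure.pi ν')) :=
      (mpsymm.integral_comp (MeasurableEquiv.measurableEmbedding e.symm) F1).symm
    have trans3 : ∫ w, F2 w ∂(Measure.pi ν)
        = ∫ p, F2 (e.symm p) ∂((ν 0).prod (Measure.pi ν')) :=
      (mpsymm.integral_comp (MeasurableEquiv.measurableEmbedding e.symm) F2).symm
    rw [show ∫ w, G1 (fun k => (w k).1) * G2 (fun k => (w k).2) ∂(Measure.pi ν)
        = ∫ w, F w ∂(Measure.pi ν) from rfl,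
      show ∫ w, G1 (fun k => (w k).1) ∂(Measure.pi ν) = ∫ w, F1 w ∂(Measure.pi ν) from rfl,
      show ∫ w, G2 (fun k => (w k).2) ∂(Measure.pi ν) = ∫ w, F2 w ∂(Measure.pi ν) from rfl,
      trans1, trans2, trans3]
    rw [integral_prod _ hFint, integral_prod _ hF1int, integral_prod _ hF2int]
    -- identify the marginal integrals with ψ
    have hmarg1 : ∀ a : ℝ × ℝ, ∫ w, F1 (e.symm (a, w)) ∂(Measure.pi ν') = ψ1 a.1 := by
      intro a
      have : (fun w => F1 (e.symm (a, w)))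
          = fun w => G1 (Fin.cons a.1 (fun j => ((w j).1))) := by
        funext w
        rw [hesymm a w, hF1]
        simp only
        rw [hconsY a w]
      rw [this, heq1 a.1]
    have hmarg2 : ∀ a : ℝ × ℝ, ∫ w, F2 (e.symm (a, w)) ∂(Measure.pi ν') = ψ2 a.2 := by
      intro a
      have : (fun w => F2 (e.symm (a, w)))
          = fun w => G2 (Fin.cons a.2 (fun j => ((w j).2))) := by
        funext w
        rw [hesymm a w, hF2]
        simp only
        rw [hconsZ a w]
      rw [this, heq2 a.2]
    have hψ1meas : Measurable ψ1 := hψ1mono.measurable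
    have hψ2meas : Measurable ψ2 := hψ2mono.measurable
    have hψint : Integrable (fun a : ℝ × ℝ => ψ1 a.1 * ψ2 a.2) (ν 0) := by
      refine (integrable_const (1:ℝ)).mono'
        (((hψ1meas.comp measurable_fst).mul (hψ2meas.comp measurable_snd)).aestronglyMeasurable)
        (Filter.Eventually.of_forall fun a => ?_)
      rw [Real.norm_eq_abs, abs_of_nonneg (mul_nonneg (hψ10 _) (hψ20 _))]
      exact mul_le_one₀ (hψ11 _) (hψ20 _) (hψ21 _)
    calc ∫ a, ∫ w, F (e.symm (a, w)) ∂(Measure.pi ν') ∂(ν 0)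
        ≤ ∫ a, ψ1 a.1 * ψ2 a.2 ∂(ν 0) := by
          refine integral_mono hFint.integral_prod_left hψint hinner
      _ ≤ (∫ a, ψ1 a.1 ∂(ν 0)) * ∫ a, ψ2 a.2 ∂(ν 0) :=
          two_var (ν 0) (hNQD 0) ψ1 ψ2 hψ1mono hψ2mono hψ10 hψ11 hψ20 hψ21
      _ = (∫ a, ∫ w, F1 (e.symm (a, w)) ∂(Measure.pi ν') ∂(ν 0))
            * ∫ a, ∫ w, F2 (e.symm (a, w)) ∂(Measure.pi ν') ∂(ν 0) := by
          congr 1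
          · exact (integral_congr_ae (Filter.Eventually.of_forall fun a => (hmarg1 a).symm))
          · exact (integral_congr_ae (Filter.Eventually.of_forall fun a => (hmarg2 a).symm))

end Core

section Assemble

lemma monotone_of_update {K : ℕ} (f : (Fin K → ℝ) → ℝ)
    (h : ∀ (k : Fin K) (v : Fin K → ℝ), Monotone fun s => f (Function.update v k s)) :
    Monotone f := by
  classical
  intro v w hvw
  set u : ℕ → (Fin K → ℝ) := fun i k => if (k : ℕ) < i then w k else v k with hu
  have h0 : u 0 = v := by funext k; simp [hu]
  have hK : u K = w := by funext k; simp [hu, k.isLt]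
  have hstep : ∀ i, f (u i) ≤ f (u (i+1)) := by
    intro i
    by_cases hi : i < K
    · set ki : Fin K := ⟨i, hi⟩ with hki
      have e1 : u i = Function.update (u i) ki (v ki) := by
        funext k
        rcases eq_or_ne k ki with rfl | hne
        · simp [Function.update_self, hu, hki]
        · simp [Function.update_of_ne hne]
      have e2 : u (i+1) = Function.update (u i) ki (w ki) := by
        funext k
        rcases eq_or_ne k ki with rfl | hne
        · simp [Function.update_self, hu, hki]
        · rw [Function.update_of_ne hne]
          have : (k : ℕ) ≠ i := fun hc => hne (by ext; exact hc)
          simp only [hu]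
          rcases Nat.lt_or_ge (k : ℕ) i with hlt | hge
          · rw [if_pos hlt, if_pos (Nat.lt_succ_of_lt hlt)]
          · have : ¬ (k:ℕ) < i := Nat.not_lt.2 hge
            rw [if_neg this, if_neg (by omega)]
      calc f (u i) = f (Function.update (u i) ki (v ki)) := by rw [← e1]
        _ ≤ f (Function.update (u i) ki (w ki)) := h ki (u i) (hvw ki)
        _ = f (u (i+1)) := by rw [← e2]
    · have : u (i+1) = u i := by
        funext k
        have hk : (k : ℕ) < i := lt_of_lt_of_le k.isLt (Nat.not_lt.1 hi)
        simp [hu, hk, Nat.lt_succ_of_lt hk]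
      rw [this]
  have hmono : Monotone fun i => f (u i) := monotone_nat_of_le_succ hstep
  calc f v = f (u 0) := by rw [h0]
    _ ≤ f (u K) := hmono (Nat.zero_le K)
    _ = f w := by rw [hK]

theorem main_norm
    {Ω : Type*} [MeasurableSpace Ω] (P : Measure Ω) [IsProbabilityMeasure P]
    (K : ℕ) (Y Z : Fin K → Ω → ℝ)
    (hYm : ∀ k, Measurable (Y k)) (hZm : ∀ k, Measurable (Z k))
    (hindep : ProbabilityTheory.iIndepFun
      (fun k ω => (Y k ω, Z k ω)) P)
    (hNQD : ∀ k, NQD P (Y k) (Z k))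
    (ε : Fin K → Bool)
    (H : (Fin K → ℝ) → ℝ)
    (hH : ∀ k, ∀ v : Fin K → ℝ,
      if ε k = true then Monotone (fun s => H (Function.update v k s))
      else Antitone (fun s => H (Function.update v k s)))
    (h0 : ∀ v, 0 ≤ H v) (h1 : ∀ v, H v ≤ 1) :
    ∫ ω, H (fun k => Y k ω) * H (fun k => Z k ω) ∂P ≤
      (∫ ω, H (fun k => Y k ω) ∂P) * ∫ ω, H (fun k => Z k ω) ∂P := by
  classical
  -- ε-flip
  set flip : (Fin K → ℝ) → (Fin K → ℝ) := fun v k => if ε k then v k else -(v k) with hflip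
  set H' : (Fin K → ℝ) → ℝ := fun v => H (flip v) with hH'
  set Y' : Fin K → Ω → ℝ := fun k ω => if ε k then Y k ω else -(Y k ω) with hY'
  set Z' : Fin K → Ω → ℝ := fun k ω => if ε k then Z k ω else -(Z k ω) with hZ'
  have hflipY : ∀ ω, flip (fun k => Y' k ω) = fun k => Y k ω := by
    intro ω; funext k
    by_cases hk : ε k <;> simp [hflip, hY', hk]
  have hflipZ : ∀ ω, flip (fun k => Z' k ω) = fun k => Z k ω := by
    intro ω; funext k
    by_cases hk : ε k <;> simp [hflip, hZ', hk]
  have hY'm : ∀ k, Measurable (Y' k) := by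
    intro k
    by_cases hk : ε k = true
    · have : Y' k = Y k := by funext ω; simp [hY', hk]
      rw [this]; exact hYm k
    · have : Y' k = fun ω => -(Y k ω) := by funext ω; simp [hY', hk]
      rw [this]; exact (hYm k).neg
  have hZ'm : ∀ k, Measurable (Z' k) := by
    intro k
    by_cases hk : ε k = true
    · have : Z' k = Z k := by funext ω; simp [hZ', hk]
      rw [this]; exact hZm k
    · have : Z' k = fun ω => -(Z k ω) := by funext ω; simp [hZ', hk]
      rw [this]; exact (hZm k).neg
  -- monotone H'
  have hupd : ∀ (k : Fin K) (v : Fin K → ℝ), Monotone fun s => H' (Function.update v k s) := by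
    intro k v
    have hkey : ∀ s : ℝ, flip (Function.update v k s)
        = Function.update (flip v) k (if ε k then s else -s) := by
      intro s; funext j
      rcases eq_or_ne j k with rfl | hne
      · simp [hflip, Function.update_self]
      · simp [hflip, Function.update_of_ne hne]
    intro s t hst
    simp only [hH', hkey]
    by_cases hk : ε k = true
    · have hm := hH k (flip v)
      rw [if_pos hk] at hm
      rw [if_pos hk, if_pos hk]
      exact hm hst
    · have hm := hH k (flip v)
      rw [if_neg hk] at hm
      rw [if_neg hk, if_neg hk]
      exact hm (neg_le_neg hst)
  have hH'mono : Monotone H' := monotone_of_update H' hupd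
  have hH'0 : ∀ v, 0 ≤ H' v := fun v => h0 _
  have hH'1 : ∀ v, H' v ≤ 1 := fun v => h1 _
  -- pairs and their laws
  set pairs : Fin K → Ω → ℝ × ℝ := fun k ω => (Y k ω, Z k ω) with hpairs
  set pairs' : Fin K → Ω → ℝ × ℝ := fun k ω => (Y' k ω, Z' k ω) with hpairs'
  have hpm : ∀ k, Measurable (pairs' k) := fun k => (hY'm k).prodMk (hZ'm k)
  have hpm0 : ∀ k, Measurable (pairs k) := fun k => (hYm k).prodMk (hZm k)
  set ν : Fin K → Measure (ℝ × ℝ) := fun k => P.map (pairs' k) with hν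
  haveI hνP : ∀ k, IsProbabilityMeasure (ν k) :=
    fun k => Measure.isProbabilityMeasure_map (hpm k).aemeasurable
  haveI hν0P : ∀ k, IsProbabilityMeasure (P.map (pairs k)) :=
    fun k => Measure.isProbabilityMeasure_map (hpm0 k).aemeasurable
  -- NQD2 for the original laws
  have hNQD2base : ∀ k, NQD2 (P.map (pairs k)) := by
    intro k y z
    have e1 : (P.map (pairs k)) (Iic y ×ˢ Iic z) = P {ω | Y k ω ≤ y ∧ Z k ω ≤ z} := by
      rw [Measure.map_apply (hpm0 k) (measurableSet_Iic.prod measurableSet_Iic)]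
      congr 1
    have e2 : (P.map (pairs k)) (Iic y ×ˢ univ) = P {ω | Y k ω ≤ y} := by
      rw [Measure.map_apply (hpm0 k) (measurableSet_Iic.prod MeasurableSet.univ)]
      congr 1
      ext ω; simp [hpairs]
    have e3 : (P.map (pairs k)) (univ ×ˢ Iic z) = P {ω | Z k ω ≤ z} := by
      rw [Measure.map_apply (hpm0 k) (MeasurableSet.univ.prod measurableSet_Iic)]
      congr 1
      ext ω; simp [hpairs]
    rw [e1, e2, e3]
    have h := hNQD k y z
    rw [← ENNReal.toReal_mul] at h
    exact (ENNReal.toReal_le_toReal (measure_ne_top _ _)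
      (ENNReal.mul_ne_top (measure_ne_top _ _) (measure_ne_top _ _))).1 h
  -- NQD2 for the flipped laws
  have hNQD2 : ∀ k, NQD2 (ν k) := by
    intro k
    by_cases hk : ε k
    · have : pairs' k = pairs k := by
        funext ω; simp [hpairs', hpairs, hY', hZ', hk]
      rw [hν]
      simp only [this]
      exact hNQD2base k
    · -- ν k = (P.map (pairs k)).map neg2
      intro y z
      have hnegpair : pairs' k = (fun p : ℝ × ℝ => (-p.1, -p.2)) ∘ pairs k := by
        funext ω; simp [hpairs', hpairs, hY', hZ', hk]
      have hmap : ν k = (P.map (pairs k)).map (fun p : ℝ × ℝ => (-p.1, -p.2)) := by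
        rw [hν]
        simp only [hnegpair]
        rw [Measure.map_map (by fun_prop : Measurable (fun p : ℝ × ℝ => (-p.1, -p.2))) (hpm0 k)]
      have hmn : Measurable (fun p : ℝ × ℝ => (-p.1, -p.2)) :=
        measurable_fst.neg.prodMk measurable_snd.neg
      have pre1 : (fun p : ℝ × ℝ => (-p.1, -p.2)) ⁻¹' (Iic y ×ˢ Iic z)
          = Ici (-y) ×ˢ Ici (-z) := by
        ext p; simp [neg_le, Prod.le_def]
      have pre2 : (fun p : ℝ × ℝ => (-p.1, -p.2)) ⁻¹' (Iic y ×ˢ univ)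
          = Ici (-y) ×ˢ univ := by
        ext p; simp [neg_le]
      have pre3 : (fun p : ℝ × ℝ => (-p.1, -p.2)) ⁻¹' (univ ×ˢ Iic z)
          = univ ×ˢ Ici (-z) := by
        ext p; simp [neg_le]
      rw [hmap, Measure.map_apply hmn (measurableSet_Iic.prod measurableSet_Iic),
        Measure.map_apply hmn (measurableSet_Iic.prod MeasurableSet.univ),
        Measure.map_apply hmn (MeasurableSet.univ.prod measurableSet_Iic),
        pre1, pre2, pre3]
      exact nqd2_upper (P.map (pairs k)) (hNQD2base k) (Ici (-y)) (Ici (-z))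
        (fun a b ha hab => le_trans ha hab) (fun a b ha hab => le_trans ha hab)
  -- independence of flipped pairs
  have hindep' : ProbabilityTheory.iIndepFun pairs' P := by
    have hcomp := hindep.comp
      (fun k (p : ℝ × ℝ) => if ε k then p else (-p.1, -p.2))
      (fun k => by
        by_cases hk : ε k
        · simpa [hk] using measurable_id'
        · simpa [hk] using (measurable_fst.neg.prodMk measurable_snd.neg))
    have : pairs' = fun k => (fun p : ℝ × ℝ => if ε k then p else (-p.1, -p.2)) ∘ (pairs k) := by
      funext k ω
      by_cases hk : ε k <;> simp [hpairs', hpairs, hY', hZ', hk]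
    rw [this]
    exact hcomp
  -- product law
  set X : Ω → (Fin K → ℝ × ℝ) := fun ω k => pairs' k ω with hX
  have hXm : Measurable X := measurable_pi_lambda _ fun k => hpm k
  have hprodlaw : P.map X = Measure.pi ν := by
    refine (Measure.pi_eq fun s hs => ?_).symm
    rw [Measure.map_apply hXm (MeasurableSet.univ_pi hs)]
    have hpre : X ⁻¹' (Set.pi univ s) = ⋂ k, pairs' k ⁻¹' s k := by
      ext ω; simp [hX, Set.mem_pi]
    rw [hpre]
    have h := (ProbabilityTheory.iIndepFun_iff_measure_inter_preimage_eq_mul.1 hindep')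
      Finset.univ (sets := s) (fun k _ => hs k)
    have hiInter : (⋂ k ∈ Finset.univ, pairs' k ⁻¹' s k) = ⋂ k, pairs' k ⁻¹' s k := by
      simp
    rw [hiInter] at h
    rw [h]
    refine Finset.prod_congr rfl fun k _ => ?_
    rw [hν]
    rw [Measure.map_apply (hpm k) (hs k)]
  -- AEMeasurability over the product law
  haveI : IsProbabilityMeasure (Measure.pi ν) := by infer_instance
  have hF1aem : AEMeasurable (fun w : Fin K → ℝ × ℝ => H' (fun k => (w k).1)) (Measure.pi ν) :=
    aem_comp_proj ν hνP Prod.fst measurable_fst H' hH'mono hH'0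
  have hF2aem : AEMeasurable (fun w : Fin K → ℝ × ℝ => H' (fun k => (w k).2)) (Measure.pi ν) :=
    aem_comp_proj ν hνP Prod.snd measurable_snd H' hH'mono hH'0
  have hFaem : AEMeasurable
      (fun w : Fin K → ℝ × ℝ => H' (fun k => (w k).1) * H' (fun k => (w k).2))
      (Measure.pi ν) := hF1aem.mul hF2aem
  -- transport the integrals
  have tr1 : ∫ ω, H (fun k => Y k ω) * H (fun k => Z k ω) ∂P
      = ∫ w, H' (fun k => (w k).1) * H' (fun k => (w k).2) ∂(Measure.pi ν) := by
    rw [← hprodlaw, integral_map hXm.aemeasurable]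
    · refine integral_congr_ae (Filter.Eventually.of_forall fun ω => ?_)
      simp only [hX, hH']
      rw [show (fun k => (pairs' k ω).1) = fun k => Y' k ω from rfl,
        show (fun k => (pairs' k ω).2) = fun k => Z' k ω from rfl, hflipY, hflipZ]
    · rw [hprodlaw]
      exact hFaem.aestronglyMeasurable
  have tr2 : ∫ ω, H (fun k => Y k ω) ∂P
      = ∫ w, H' (fun k => (w k).1) ∂(Measure.pi ν) := by
    rw [← hprodlaw, integral_map hXm.aemeasurable]
    · refine integral_congr_ae (Filter.Eventually.of_forall fun ω => ?_)
      simp only [hX, hH']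
      rw [show (fun k => (pairs' k ω).1) = fun k => Y' k ω from rfl, hflipY]
    · rw [hprodlaw]
      exact hF1aem.aestronglyMeasurable
  have tr3 : ∫ ω, H (fun k => Z k ω) ∂P
      = ∫ w, H' (fun k => (w k).2) ∂(Measure.pi ν) := by
    rw [← hprodlaw, integral_map hXm.aemeasurable]
    · refine integral_congr_ae (Filter.Eventually.of_forall fun ω => ?_)
      simp only [hX, hH']
      rw [show (fun k => (pairs' k ω).2) = fun k => Z' k ω from rfl, hflipZ]
    · rw [hprodlaw]
      exact hF2aem.aestronglyMeasurable
  rw [tr1, tr2, tr3]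
  exact core K ν hνP hNQD2 H' H' hH'mono hH'mono hH'0 hH'1 hH'0 hH'1

end Assemble

section Trunc

lemma clamp_abs_le (B x : ℝ) (hB : 0 ≤ B) : |max (min x B) (-B)| ≤ |x| := by
  rcases le_total 0 x with hx | hx
  · have h1 : -B ≤ min x B := le_min (by linarith) (by linarith)
    rw [max_eq_left h1, abs_of_nonneg (le_min hx hB), abs_of_nonneg hx]
    exact min_le_left _ _
  · have h1 : min x B = x := min_eq_left (by linarith)
    rw [h1, abs_of_nonpos (max_le hx (by linarith)), abs_of_nonpos hx]
    simp [le_max_left]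

lemma clamp_le_B (B x : ℝ) (hB : 0 ≤ B) : |max (min x B) (-B)| ≤ B := by
  rw [abs_le]
  constructor
  · exact le_max_right _ _
  · exact max_le (le_trans (min_le_right _ _) le_rfl) (by linarith)

lemma clamp_tendsto (x : ℝ) :
    Tendsto (fun n : ℕ => max (min x ((n:ℝ)+1)) (-((n:ℝ)+1))) atTop (𝓝 x) := by
  have hev : (fun _ : ℕ => x) =ᶠ[atTop] fun n : ℕ => max (min x ((n:ℝ)+1)) (-((n:ℝ)+1)) := by
    rw [Filter.eventuallyEq_iff_exists_mem]
    refine ⟨{n : ℕ | |x| ≤ (n:ℝ)+1}, ?_, ?_⟩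
    · rw [mem_atTop_sets]
      refine ⟨⌈|x|⌉₊, fun n hn => ?_⟩
      have : |x| ≤ (⌈|x|⌉₊ : ℝ) := Nat.le_ceil _
      have h2 : ((⌈|x|⌉₊ : ℕ) : ℝ) ≤ (n : ℝ) := by exact_mod_cast hn
      simp only [mem_setOf_eq]
      linarith
    · intro n hn
      simp only [mem_setOf_eq] at hn
      have h1 : x ≤ (n:ℝ)+1 := le_trans (le_abs_self x) hn
      have h2 : -((n:ℝ)+1) ≤ x := by
        have := neg_abs_le x
        linarith
      change x = max (min x ((n:ℝ)+1)) (-((n:ℝ)+1))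
      rw [min_eq_left h1, max_eq_left h2]
  exact tendsto_const_nhds.congr' hev

/-- Multivariate extension of Lehmann's lemma: if `(Y_k, Z_k)` are independent
pairs, each pair NQD, and `H` is coordinatewise monotone (with consistent
direction per coordinate), then `E[H(Y)H(Z)] ≤ E[H(Y)] E[H(Z)]`. -/
theorem nqd_pairs_multivariate_monotone
    {Ω : Type*} [MeasurableSpace Ω] (P : Measure Ω) [IsProbabilityMeasure P]
    (K : ℕ) (Y Z : Fin K → Ω → ℝ)
    (hYm : ∀ k, Measurable (Y k)) (hZm : ∀ k, Measurable (Z k))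
    (hindep : ProbabilityTheory.iIndepFun
      (fun k ω => (Y k ω, Z k ω)) P)
    (hNQD : ∀ k, NQD P (Y k) (Z k))
    (ε : Fin K → Bool)
    (H : (Fin K → ℝ) → ℝ)
    (hH : ∀ k, ∀ v : Fin K → ℝ,
      if ε k = true then Monotone (fun s => H (Function.update v k s))
      else Antitone (fun s => H (Function.update v k s)))
    (hint1 : Integrable (fun ω => H (fun k => Y k ω)) P)
    (hint2 : Integrable (fun ω => H (fun k => Z k ω)) P)
    (hint3 : Integrable (fun ω => H (fun k => Y k ω) * H (fun k => Z k ω)) P) :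
    ∫ ω, H (fun k => Y k ω) * H (fun k => Z k ω) ∂P ≤
      (∫ ω, H (fun k => Y k ω) ∂P) * ∫ ω, H (fun k => Z k ω) ∂P := by
  classical
  -- clamped versions
  set clamp : ℕ → ℝ → ℝ := fun n t => max (min t ((n:ℝ)+1)) (-((n:ℝ)+1)) with hclamp
  have hclamp_cont : ∀ n, Continuous (clamp n) := fun n =>
    (continuous_id.min continuous_const).max continuous_const
  have hclamp_mono : ∀ n, Monotone (clamp n) := fun n =>
    ((monotone_id.min monotone_const).max monotone_const)
  set CY : ℕ → Ω → ℝ := fun n ω => clamp n (H (fun k => Y k ω)) with hCY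
  set CZ : ℕ → Ω → ℝ := fun n ω => clamp n (H (fun k => Z k ω)) with hCZ
  have hCYaesm : ∀ n, AEStronglyMeasurable (CY n) P := fun n =>
    (hclamp_cont n).comp_aestronglyMeasurable hint1.aestronglyMeasurable
  have hCZaesm : ∀ n, AEStronglyMeasurable (CZ n) P := fun n =>
    (hclamp_cont n).comp_aestronglyMeasurable hint2.aestronglyMeasurable
  have hBpos : ∀ n : ℕ, (0:ℝ) < (n:ℝ)+1 := fun n => by positivity
  have hCYb : ∀ n ω, |CY n ω| ≤ (n:ℝ)+1 := fun n ω => clamp_le_B _ _ (hBpos n).le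
  have hCZb : ∀ n ω, |CZ n ω| ≤ (n:ℝ)+1 := fun n ω => clamp_le_B _ _ (hBpos n).le
  have hCYint : ∀ n, Integrable (CY n) P := fun n =>
    (integrable_const ((n:ℝ)+1)).mono' (hCYaesm n)
      (Eventually.of_forall fun ω => by rw [Real.norm_eq_abs]; exact hCYb n ω)
  have hCZint : ∀ n, Integrable (CZ n) P := fun n =>
    (integrable_const ((n:ℝ)+1)).mono' (hCZaesm n)
      (Eventually.of_forall fun ω => by rw [Real.norm_eq_abs]; exact hCZb n ω)
  have hCprodint : ∀ n, Integrable (fun ω => CY n ω * CZ n ω) P := fun n =>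
    (integrable_const (((n:ℝ)+1) * ((n:ℝ)+1))).mono' ((hCYaesm n).mul (hCZaesm n))
      (Eventually.of_forall fun ω => by
        rw [Real.norm_eq_abs, abs_mul]
        exact mul_le_mul (hCYb n ω) (hCZb n ω) (abs_nonneg _) (hBpos n).le)
  -- per-n inequality
  have hstep : ∀ n : ℕ, ∫ ω, CY n ω * CZ n ω ∂P ≤ (∫ ω, CY n ω ∂P) * ∫ ω, CZ n ω ∂P := by
    intro n
    set B : ℝ := (n:ℝ)+1 with hB
    have hBpos' : (0:ℝ) < B := hBpos n
    set m : ℝ → ℝ := fun t => (clamp n t + B) / (2*B) with hm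
    have hmmono : Monotone m := by
      intro s t hst
      have := hclamp_mono n hst
      rw [hm]
      simp only
      apply div_le_div_of_nonneg_right ?_ (by linarith)
      · linarith
    set Hb : (Fin K → ℝ) → ℝ := fun v => m (H v) with hHb
    have hHbH : ∀ k, ∀ v : Fin K → ℝ,
        if ε k = true then Monotone (fun s => Hb (Function.update v k s))
        else Antitone (fun s => Hb (Function.update v k s)) := by
      intro k v
      by_cases hk : ε k = true
      · rw [if_pos hk]
        have h := hH k v; rw [if_pos hk] at h
        exact hmmono.comp h
      · rw [if_neg hk]
        have h := hH k v; rw [if_neg hk] at h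
        exact hmmono.comp_antitone h
    have hHb0 : ∀ v, 0 ≤ Hb v := by
      intro v
      rw [hHb]
      simp only [hm]
      apply div_nonneg ?_ (by linarith)
      have := clamp_le_B B (H v) hBpos'.le
      rw [abs_le] at this
      rw [hB] at this ⊢
      linarith [this.1]
    have hHb1 : ∀ v, Hb v ≤ 1 := by
      intro v
      rw [hHb]
      simp only [hm]
      rw [div_le_one (by linarith)]
      have := clamp_le_B B (H v) hBpos'.le
      rw [abs_le] at this
      rw [hB] at this ⊢
      linarith [this.2]
    have hmain := main_norm P K Y Z hYm hZm hindep hNQD ε Hb hHbH hHb0 hHb1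
    -- expand
    have I1 : Integrable (fun ω => CY n ω * CZ n ω + B * CY n ω) P :=
      (hCprodint n).add ((hCYint n).const_mul B)
    have I2 : Integrable (fun ω => CY n ω * CZ n ω + B * CY n ω + B * CZ n ω) P :=
      I1.add ((hCZint n).const_mul B)
    have e1 : ∫ ω, Hb (fun k => Y k ω) * Hb (fun k => Z k ω) ∂P
        = ((2*B)*(2*B))⁻¹ * (∫ ω, CY n ω * CZ n ω ∂P + B * ∫ ω, CY n ω ∂P
            + B * ∫ ω, CZ n ω ∂P + B*B) := by
      have : (fun ω => Hb (fun k => Y k ω) * Hb (fun k => Z k ω))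
          = fun ω => ((2*B)*(2*B))⁻¹
              * (CY n ω * CZ n ω + B * CY n ω + B * CZ n ω + B*B) := by
        funext ω
        rw [hHb]
        simp only [hm, hCY, hCZ]
        field_simp
        ring
      rw [this, integral_const_mul]
      congr 1
      rw [integral_add I2 (integrable_const (B*B)),
        integral_add I1 ((hCZint n).const_mul B),
        integral_add (hCprodint n) ((hCYint n).const_mul B),
        integral_const_mul, integral_const_mul, integral_const]
      simp [measure_univ]
    have e2 : ∫ ω, Hb (fun k => Y k ω) ∂P = (2*B)⁻¹ * (∫ ω, CY n ω ∂P + B) := by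
      have : (fun ω => Hb (fun k => Y k ω)) = fun ω => (2*B)⁻¹ * (CY n ω + B) := by
        funext ω
        rw [hHb]
        simp only [hm, hCY]
        field_simp
      rw [this, integral_const_mul, integral_add (hCYint n) (integrable_const _)]
      simp [measure_univ]
    have e3 : ∫ ω, Hb (fun k => Z k ω) ∂P = (2*B)⁻¹ * (∫ ω, CZ n ω ∂P + B) := by
      have : (fun ω => Hb (fun k => Z k ω)) = fun ω => (2*B)⁻¹ * (CZ n ω + B) := by
        funext ω
        rw [hHb]
        simp only [hm, hCZ]
        field_simp
      rw [this, integral_const_mul, integral_add (hCZint n) (integrable_const _)]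
      simp [measure_univ]
    rw [e1, e2, e3] at hmain
    set a := ∫ ω, CY n ω * CZ n ω ∂P
    set b := ∫ ω, CY n ω ∂P
    set c := ∫ ω, CZ n ω ∂P
    have h2B : (0:ℝ) < 2*B := by linarith
    have hexp : ((2*B)*(2*B))⁻¹ * (a + B*b + B*c + B*B)
        ≤ ((2*B)⁻¹ * (b + B)) * ((2*B)⁻¹ * (c + B)) := hmain
    have h4 : (0:ℝ) < (2*B)*(2*B) := by positivity
    have key : a + B*b + B*c + B*B ≤ (b+B)*(c+B) := by
      have h := mul_le_mul_of_nonneg_left hexp h4.le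
      rw [mul_inv_cancel_left₀ (ne_of_gt h4)] at h
      have heq : ((2*B)*(2*B)) * ((2*B)⁻¹ * (b + B) * ((2*B)⁻¹ * (c + B)))
          = (b+B)*(c+B) := by
        have hne : (2*B) ≠ 0 := by positivity
        field_simp
      rw [heq] at h
      exact h
    nlinarith [key]
  -- limits
  have htY : Tendsto (fun n => ∫ ω, CY n ω ∂P) atTop (𝓝 (∫ ω, H (fun k => Y k ω) ∂P)) := by
    refine tendsto_integral_of_dominated_convergence (fun ω => |H (fun k => Y k ω)|)
      hCYaesm hint1.abs ?_ ?_
    · intro n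
      refine Eventually.of_forall fun ω => ?_
      rw [Real.norm_eq_abs]
      exact clamp_abs_le _ _ (hBpos n).le
    · exact Eventually.of_forall fun ω => clamp_tendsto _
  have htZ : Tendsto (fun n => ∫ ω, CZ n ω ∂P) atTop (𝓝 (∫ ω, H (fun k => Z k ω) ∂P)) := by
    refine tendsto_integral_of_dominated_convergence (fun ω => |H (fun k => Z k ω)|)
      hCZaesm hint2.abs ?_ ?_
    · intro n
      refine Eventually.of_forall fun ω => ?_
      rw [Real.norm_eq_abs]
      exact clamp_abs_le _ _ (hBpos n).le
    · exact Eventually.of_forall fun ω => clamp_tendsto _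
  have htProd : Tendsto (fun n => ∫ ω, CY n ω * CZ n ω ∂P) atTop
      (𝓝 (∫ ω, H (fun k => Y k ω) * H (fun k => Z k ω) ∂P)) := by
    refine tendsto_integral_of_dominated_convergence
      (fun ω => |H (fun k => Y k ω) * H (fun k => Z k ω)|)
      (fun n => (hCYaesm n).mul (hCZaesm n)) hint3.abs ?_ ?_
    · intro n
      refine Eventually.of_forall fun ω => ?_
      show ‖CY n ω * CZ n ω‖ ≤ |(H fun k => Y k ω) * H fun k => Z k ω|
      rw [Real.norm_eq_abs, abs_mul, abs_mul]
      exact mul_le_mul (clamp_abs_le _ _ (hBpos n).le) (clamp_abs_le _ _ (hBpos n).le)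
        (abs_nonneg _) (abs_nonneg _)
    · exact Eventually.of_forall fun ω => (clamp_tendsto _).mul (clamp_tendsto _)
  exact le_of_tendsto_of_tendsto' htProd (htY.mul htZ) hstep

end Trunc
end

section
/- (ANOVA orthogonality.) Let f : (0,1]^m → ℝ be square-integrable with respect to the uniform product measure, and define the functional ANOVA components recursively by f_u(ξ^u) = ∫ [f(ξ) - ∑_{v ⊊ u} f_v(ξ^v)] dF_{D∖u} for u ⊆ {1,...,m}. Then f = ∑_{u ⊆ {1,...,m}} f_u, and the components are orthogonal: for u ≠ w, ∫ f_u(ξ^u) f_w(ξ^w) dF = 0; consequently Var(f(ξ)) = ∑_{u ≠ ∅} Var(f_u(ξ^u)). -/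
open MeasureTheory

private lemma anova_integrable_mul {α : Type*} [MeasurableSpace α] {μ : Measure α}
    {f g : α → ℝ} (hf : MemLp f 2 μ) (hg : MemLp g 2 μ) :
    Integrable (fun x => f x * g x) μ := by
  refine ((hf.integrable_sq.add hg.integrable_sq).const_mul (1/2)).mono'
    (hf.aestronglyMeasurable.mul hg.aestronglyMeasurable) (Filter.Eventually.of_forall fun x => ?_)
  simp only [Pi.add_apply]
  rw [Real.norm_eq_abs, abs_mul]
  nlinarith [sq_abs (f x), sq_abs (g x), abs_nonneg (f x), abs_nonneg (g x),
    sq_nonneg (|f x| - |g x|)]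

private lemma anova_SP {m : ℕ} (ν : Measure ℝ) [IsProbabilityMeasure ν] (b : Finset (Fin m)) :
    MeasurePreserving (fun p : (Fin m → ℝ) × (Fin m → ℝ) => b.piecewise p.1 p.2)
      ((Measure.pi fun _ => ν).prod (Measure.pi fun _ => ν)) (Measure.pi fun _ => ν) := by
  have hmeas : Measurable fun p : (Fin m → ℝ) × (Fin m → ℝ) => b.piecewise p.1 p.2 := by
    refine measurable_pi_lambda _ fun k => ?_
    by_cases hk : k ∈ b
    · simp only [Finset.piecewise_eq_of_mem _ _ _ hk]
      exact (measurable_pi_apply k).comp measurable_fst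
    · simp only [Finset.piecewise_eq_of_notMem _ _ _ hk]
      exact (measurable_pi_apply k).comp measurable_snd
  refine ⟨hmeas, ?_⟩
  refine (Measure.pi_eq fun s hs => ?_).symm
  rw [Measure.map_apply hmeas (MeasurableSet.univ_pi hs)]
  have hpre : (fun p : (Fin m → ℝ) × (Fin m → ℝ) => b.piecewise p.1 p.2) ⁻¹' Set.pi Set.univ s =
      (Set.pi Set.univ fun k => if k ∈ b then s k else Set.univ) ×ˢ
      (Set.pi Set.univ fun k => if k ∈ b then Set.univ else s k) := by
    ext p
    simp only [Set.mem_preimage, Set.mem_pi, Set.mem_univ, true_implies, Set.mem_prod]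
    constructor
    · intro h
      constructor
      · intro k
        by_cases hk : k ∈ b
        · simpa [hk] using (by simpa [Finset.piecewise_eq_of_mem _ _ _ hk] using h k)
        · simp [hk]
      · intro k
        by_cases hk : k ∈ b
        · simp [hk]
        · simpa [hk] using (by simpa [Finset.piecewise_eq_of_notMem _ _ _ hk] using h k)
    · rintro ⟨h1, h2⟩ k
      by_cases hk : k ∈ b
      · simpa [Finset.piecewise_eq_of_mem _ _ _ hk] using (by simpa [hk] using h1 k)
      · simpa [Finset.piecewise_eq_of_notMem _ _ _ hk] using (by simpa [hk] using h2 k)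
  rw [hpre, Measure.prod_prod, Measure.pi_pi, Measure.pi_pi, ← Finset.prod_mul_distrib]
  refine Finset.prod_congr rfl fun k _ => ?_
  by_cases hk : k ∈ b <;> simp [hk]

/-- Functional ANOVA decomposition on `(0,1]^m` with the uniform product
measure: the components defined by the recursion
`f_u(ξ^u) = ∫ [f - ∑_{v ⊊ u} f_v] dF_{D∖u}` sum to `f`, are mutually
orthogonal, and decompose the variance of `f`. -/
theorem functional_anova
    (m : ℕ)
    (μ : Measure (Fin m → ℝ))
    (hμ : μ = Measure.pi fun _ => volume.restrict (Set.Ioc (0:ℝ) 1))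
    (f : (Fin m → ℝ) → ℝ)
    (hf2 : MemLp f 2 μ)
    (F : Finset (Fin m) → ((Fin m → ℝ) → ℝ))
    (hFmeas : ∀ u, Measurable (F u))
    (hF2 : ∀ u, MemLp (F u) 2 μ)
    (hFdep : ∀ u, ∀ ξ ξ' : Fin m → ℝ, (∀ k ∈ u, ξ k = ξ' k) → F u ξ = F u ξ')
    (hrec : ∀ u : Finset (Fin m), ∀ ξ : Fin m → ℝ,
      F u ξ = ∫ η, (f (u.piecewise ξ η) -
        ∑ v ∈ u.powerset.erase u, F v (u.piecewise ξ η)) ∂μ) :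
    (∀ ξ, f ξ = ∑ u ∈ (Finset.univ : Finset (Fin m)).powerset, F u ξ) ∧
    (∀ u w : Finset (Fin m), u ≠ w → (∫ ξ, F u ξ * F w ξ ∂μ) = 0) ∧
    ((∫ ξ, (f ξ)^2 ∂μ) - (∫ ξ, f ξ ∂μ)^2 =
      ∑ u ∈ ((Finset.univ : Finset (Fin m)).powerset).erase ∅,
        ∫ ξ, (F u ξ)^2 ∂μ) := by
  classical
  haveI hν : IsProbabilityMeasure (volume.restrict (Set.Ioc (0:ℝ) 1)) :=
    ⟨by simp [Real.volume_Ioc]⟩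
  haveI hμP : IsProbabilityMeasure μ := by rw [hμ]; infer_instance
  -- the basic measure-preserving gluing map
  have hSP : ∀ b : Finset (Fin m),
      MeasurePreserving (fun p : (Fin m → ℝ) × (Fin m → ℝ) => b.piecewise p.1 p.2)
        (μ.prod μ) μ := by
    intro b; rw [hμ]; exact anova_SP _ b
  -- integrability basics
  have hfint : Integrable f μ := hf2.integrable one_le_two
  have hFint : ∀ u, Integrable (F u) μ := fun u => (hF2 u).integrable one_le_two
  -- the integrands in the recursion
  set g : Finset (Fin m) → (Fin m → ℝ) → ℝ :=
    fun u x => f x - ∑ v ∈ u.powerset.erase u, F v x with hg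
  have hgint : ∀ u, Integrable (g u) μ := fun u =>
    hfint.sub (integrable_finset_sum _ fun v _ => hFint v)
  -- slicing: a.e. section integrability
  have hslice : ∀ (h : (Fin m → ℝ) → ℝ), Integrable h μ → ∀ a : Finset (Fin m),
      ∀ᵐ ξ ∂μ, Integrable (fun θ => h (a.piecewise ξ θ)) μ := by
    intro h hh a
    have h1 : Integrable (fun p : (Fin m → ℝ) × (Fin m → ℝ) => h (a.piecewise p.1 p.2))
        (μ.prod μ) := ((hSP a).integrable_comp hh.aestronglyMeasurable).mpr hh
    exact h1.prod_right_ae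
  -- transport of integrals along the gluing map
  have htrans : ∀ (h : (Fin m → ℝ) → ℝ) (a : Finset (Fin m)),
      AEStronglyMeasurable h μ →
      ∫ p : (Fin m → ℝ) × (Fin m → ℝ), h (a.piecewise p.1 p.2) ∂(μ.prod μ) = ∫ x, h x ∂μ := by
    intro h a hh
    have := integral_map ((hSP a).measurable.aemeasurable)
      (f := h) ((hSP a).map_eq.symm ▸ hh)
    rw [(hSP a).map_eq] at this
    exact this.symm
  -- the key vanishing property, by strong induction on the cardinality of `u`
  have KP : ∀ (n : ℕ) (u : Finset (Fin m)), u.card ≤ n → ∀ b : Finset (Fin m), ¬ u ⊆ b →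
      ∀ᵐ ξ ∂μ, (∫ θ, F u (b.piecewise ξ θ) ∂μ) = 0 := by
    intro n
    induction n with
    | zero =>
      intro u hu b hub
      rw [Nat.le_zero, Finset.card_eq_zero] at hu
      exact absurd (hu ▸ Finset.empty_subset b) hub
    | succ n ih =>
      intro u hcard b hub
      set a := u ∩ b with ha
      have hau : a ⊆ u := Finset.inter_subset_left
      have hanu : a ≠ u := fun h => hub (Finset.inter_eq_left.mp h)
      have haP : a ∈ u.powerset.erase u :=
        Finset.mem_erase.2 ⟨hanu, Finset.mem_powerset.2 hau⟩
      have hsub : a.powerset.erase a ⊆ u.powerset.erase u := by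
        intro v hv
        rw [Finset.mem_erase, Finset.mem_powerset] at hv ⊢
        exact ⟨fun h => hanu (Finset.Subset.antisymm hau (h ▸ hv.2)), hv.2.trans hau⟩
      -- a.e. facts
      have hA := hslice (g u) (hgint u) a
      have hB := hslice (g a) (hgint a) a
      have hC : ∀ᵐ ξ ∂μ, ∀ v ∈ u.powerset.erase u,
          Integrable (fun θ => F v (a.piecewise ξ θ)) μ :=
        (Filter.eventually_all_finset _).2 fun v _ => hslice (F v) (hFint v) a
      have hD : ∀ᵐ ξ ∂μ, ∀ v ∈ (u.powerset.erase u).filter (fun v => ¬ v ⊆ a),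
          (∫ θ, F v (a.piecewise ξ θ) ∂μ) = 0 := by
        refine (Filter.eventually_all_finset _).2 fun v hv => ?_
        rw [Finset.mem_filter, Finset.mem_erase, Finset.mem_powerset] at hv
        have hvcard : v.card ≤ n := by
          have : v ⊂ u := Finset.ssubset_iff_subset_ne.2 ⟨hv.1.2, hv.1.1⟩
          have := Finset.card_lt_card this
          omega
        exact ih v hvcard a hv.2
      filter_upwards [hA, hB, hC, hD] with ξ hA hB hC hD
      -- the pointwise identity for the composed gluing maps
      have hkey : ∀ η ζ : Fin m → ℝ,
          u.piecewise (b.piecewise ξ η) ζ = a.piecewise ξ (u.piecewise η ζ) := by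
        intro η ζ
        funext k
        by_cases hu' : k ∈ u <;> by_cases hb' : k ∈ b <;>
          simp [Finset.piecewise, ha, Finset.mem_inter, hu', hb']
      have hGint : Integrable
          (fun p : (Fin m → ℝ) × (Fin m → ℝ) => g u (a.piecewise ξ (u.piecewise p.1 p.2)))
          (μ.prod μ) :=
        ((hSP u).integrable_comp hA.aestronglyMeasurable).mpr hA
      calc
        ∫ η, F u (b.piecewise ξ η) ∂μ
            = ∫ η, ∫ ζ, g u (a.piecewise ξ (u.piecewise η ζ)) ∂μ ∂μ := by
              have heq : (fun η => F u (b.piecewise ξ η)) =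
                  fun η => ∫ ζ, g u (a.piecewise ξ (u.piecewise η ζ)) ∂μ := by
                funext η
                rw [hrec u (b.piecewise ξ η)]
                simp only [hkey, hg]
              rw [heq]
        _ = ∫ p : (Fin m → ℝ) × (Fin m → ℝ), g u (a.piecewise ξ (u.piecewise p.1 p.2))
              ∂(μ.prod μ) := (integral_prod _ hGint).symm
        _ = ∫ θ, g u (a.piecewise ξ θ) ∂μ := by
              have h1 : Integrable (fun θ => g u (a.piecewise ξ θ)) μ := hA
              have := integral_map ((hSP u).measurable.aemeasurable)
                (f := fun θ => g u (a.piecewise ξ θ)) ((hSP u).map_eq.symm ▸ h1.aestronglyMeasurable)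
              rw [(hSP u).map_eq] at this
              simpa using this.symm
        _ = ∫ θ, (g a (a.piecewise ξ θ) -
              ∑ v ∈ (u.powerset.erase u) \ (a.powerset.erase a), F v (a.piecewise ξ θ)) ∂μ := by
              refine integral_congr_ae (Filter.Eventually.of_forall fun θ => ?_)
              simp only [hg]
              rw [← Finset.sum_sdiff hsub]
              ring
        _ = F a ξ - ∑ v ∈ (u.powerset.erase u) \ (a.powerset.erase a),
              ∫ θ, F v (a.piecewise ξ θ) ∂μ := by
              rw [integral_sub hB (integrable_finset_sum _ fun v hv =>
                hC v (Finset.mem_sdiff.1 hv).1), integral_finset_sum _ (fun v hv =>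
                hC v (Finset.mem_sdiff.1 hv).1), ← hrec a ξ]
        _ = 0 := by
              have hvanish : ∀ v ∈ (u.powerset.erase u) \ (a.powerset.erase a), v ≠ a →
                  (∫ θ, F v (a.piecewise ξ θ) ∂μ) = 0 := by
                intro v hv hva
                rw [Finset.mem_sdiff] at hv
                have hvnsub : ¬ v ⊆ a := by
                  intro hvs
                  exact hv.2 (Finset.mem_erase.2 ⟨hva, Finset.mem_powerset.2 hvs⟩)
                exact hD v (Finset.mem_filter.2 ⟨hv.1, hvnsub⟩)
              have hIa : (∫ θ, F a (a.piecewise ξ θ) ∂μ) = F a ξ := by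
                have hconst : ∀ θ, F a (a.piecewise ξ θ) = F a ξ := fun θ =>
                  hFdep a _ ξ fun k hk => Finset.piecewise_eq_of_mem _ _ _ hk
                simp only [hconst]
                simp [measure_univ]
              rw [Finset.sum_eq_single_of_mem a
                (Finset.mem_sdiff.2 ⟨haP, fun h => (Finset.mem_erase.1 h).1 rfl⟩)
                hvanish, hIa, sub_self]
  -- Part 1: the decomposition
  have hsum : ∀ ξ, f ξ = ∑ u ∈ (Finset.univ : Finset (Fin m)).powerset, F u ξ := by
    intro ξ
    have h := hrec Finset.univ ξ
    simp only [Finset.piecewise_univ] at h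
    rw [integral_const] at h
    simp only [measure_univ, ENNReal.toReal_one, probReal_univ, one_smul] at h
    rw [← Finset.sum_erase_add _ _ (Finset.mem_powerset_self (Finset.univ : Finset (Fin m)))]
    rw [h]; ring
  -- Part 2: orthogonality
  have horth0 : ∀ u w : Finset (Fin m), ¬ u ⊆ w → (∫ ξ, F u ξ * F w ξ ∂μ) = 0 := by
    intro u w huw
    have hmul : Integrable (fun x => F u x * F w x) μ := anova_integrable_mul (hF2 u) (hF2 w)
    have hcompInt : Integrable
        (fun p : (Fin m → ℝ) × (Fin m → ℝ) =>
          F u (w.piecewise p.1 p.2) * F w (w.piecewise p.1 p.2)) (μ.prod μ) :=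
      ((hSP w).integrable_comp hmul.aestronglyMeasurable).mpr hmul
    have h1 : ∫ ξ, F u ξ * F w ξ ∂μ = ∫ p : (Fin m → ℝ) × (Fin m → ℝ),
        F u (w.piecewise p.1 p.2) * F w (w.piecewise p.1 p.2) ∂(μ.prod μ) :=
      (htrans (fun x => F u x * F w x) w hmul.aestronglyMeasurable).symm
    rw [h1, integral_prod _ hcompInt]
    have h2 : ∀ᵐ η ∂μ, (∫ ζ, F u (w.piecewise η ζ) * F w (w.piecewise η ζ) ∂μ) = 0 := by
      filter_upwards [KP u.card u le_rfl w huw] with η hη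
      have hcw : ∀ ζ, F w (w.piecewise η ζ) = F w η := fun ζ =>
        hFdep w _ η fun k hk => Finset.piecewise_eq_of_mem _ _ _ hk
      simp only [hcw]
      rw [integral_mul_const, hη, zero_mul]
    calc ∫ η, ∫ ζ, F u (w.piecewise η ζ) * F w (w.piecewise η ζ) ∂μ ∂μ
        = ∫ _η, (0:ℝ) ∂μ := integral_congr_ae h2
      _ = 0 := integral_zero _ _
  have horth : ∀ u w : Finset (Fin m), u ≠ w → (∫ ξ, F u ξ * F w ξ ∂μ) = 0 := by
    intro u w huw
    by_cases h : u ⊆ w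
    · have hwu : ¬ w ⊆ u := fun h' => huw (Finset.Subset.antisymm h h')
      have := horth0 w u hwu
      simpa [mul_comm] using this
    · exact horth0 u w h
  -- the empty component is the mean
  have hFempty : ∀ ξ, F ∅ ξ = ∫ x, f x ∂μ := by
    intro ξ
    rw [hrec ∅ ξ]
    simp [Finset.piecewise_empty, Finset.powerset_empty, Finset.erase_singleton]
  -- Part 3: variance decomposition
  refine ⟨hsum, horth, ?_⟩
  have hsq : ∫ ξ, (f ξ)^2 ∂μ =
      ∑ u ∈ (Finset.univ : Finset (Fin m)).powerset, ∫ ξ, (F u ξ)^2 ∂μ := by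
    have h1 : (fun ξ => (f ξ)^2) = fun ξ =>
        ∑ u ∈ (Finset.univ : Finset (Fin m)).powerset,
          ∑ w ∈ (Finset.univ : Finset (Fin m)).powerset, F u ξ * F w ξ := by
      funext ξ
      rw [sq, hsum ξ, Finset.sum_mul_sum]
    rw [h1, integral_finset_sum _ (fun u _ => integrable_finset_sum _ fun w _ =>
      anova_integrable_mul (hF2 u) (hF2 w))]
    refine Finset.sum_congr rfl fun u hu => ?_
    rw [integral_finset_sum _ (fun w _ => anova_integrable_mul (hF2 u) (hF2 w))]
    rw [Finset.sum_eq_single_of_mem u hu (fun w _ hw => horth u w hw.symm)]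
    simp [sq]
  have hempty : ∫ ξ, (F ∅ ξ)^2 ∂μ = (∫ ξ, f ξ ∂μ)^2 := by
    simp only [hFempty]
    rw [integral_const]
    simp [measure_univ]
  rw [hsq, ← hempty,
    ← Finset.sum_erase_add _ _ (Finset.empty_mem_powerset (Finset.univ : Finset (Fin m)))]
  ring
end
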